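/- arXiv:2408.17272 — 7 statements merged into one kernel-verified Lean document; each statement's English description precedes it below -/
import Mathlib

section
/- Let q be an odd prime power with q ≡ 3 (mod 4). Then the number of u ∈ F_q with χ(u+1) = χ(u-1) ≠ 0 equals (q-3)/2, where χ is the quadratic character of F_q. -/
open Finset
open scoped Classical

/-- The quadratic character of a finite field, valued in ℤ. -/
noncomputable def qchar {F : Type*} [Field F] (x : F) : ℤ :=
  if x = 0 then 0 else if IsSquare x then 1 else -1

lemma qchar_eq_quadraticCharFun {F : Type*} [Field F] [DecidableEq F] (x : F) :
    qchar x = quadraticCharFun F x := by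
  unfold qchar quadraticCharFun
  by_cases h : x = 0 <;> by_cases h2 : IsSquare x <;> simp [h, h2]

lemma qchar_pm {F : Type*} [Field F] {x : F} (hx : x ≠ 0) :
    qchar x = 1 ∨ qchar x = -1 := by
  unfold qchar
  rw [if_neg hx]
  split_ifs <;> simp

lemma qchar_mul {F : Type*} [Field F] [Fintype F] (a b : F) :
    qchar (a * b) = qchar a * qchar b := by
  have e : ∀ x : F, qchar x = quadraticCharFun F x := fun x => by
    unfold qchar quadraticCharFun
    by_cases h1 : x = 0 <;> by_cases h2 : IsSquare x <;> simp [h1, h2]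
  simp only [e]
  exact quadraticCharFun_mul a b

theorem stmt_3 {F : Type*} [Field F] [Fintype F]
    (hq : Fintype.card F % 4 = 3) :
    (Finset.univ.filter fun u : F =>
        qchar (u + 1) = qchar (u - 1) ∧ qchar (u + 1) ≠ 0).card
      = (Fintype.card F - 3) / 2 := by
  classical
  set q := Fintype.card F with hqdef
  have hchar : ringChar F ≠ 2 := by
    intro h
    have := FiniteField.even_card_of_char_two (F := F) h
    omega
  have h2 : (2 : F) ≠ 0 := Ring.two_ne_zero hchar
  -- Step 1: the condition is equivalent to u^2 - 1 being a nonzero square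
  have hcond : ∀ u : F, (qchar (u + 1) = qchar (u - 1) ∧ qchar (u + 1) ≠ 0)
      ↔ (∃ s : F, s ≠ 0 ∧ s ^ 2 = u ^ 2 - 1) := by
    intro u
    have hfact : (u : F) ^ 2 - 1 = (u + 1) * (u - 1) := by ring
    constructor
    · rintro ⟨heq, hne⟩
      have ha : (u + 1 : F) ≠ 0 := by
        intro h; rw [h] at hne; simp [qchar] at hne
      have hb : (u - 1 : F) ≠ 0 := by
        intro h; rw [heq, h] at hne; simp [qchar] at hne
      have hc : (u + 1) * (u - 1) ≠ 0 := mul_ne_zero ha hb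
      have hmul : qchar ((u + 1) * (u - 1)) = 1 := by
        rw [qchar_mul, heq]
        rcases qchar_pm hb with h | h <;> rw [h] <;> ring
      have hsq : IsSquare ((u + 1) * (u - 1)) := by
        by_contra hns
        unfold qchar at hmul
        rw [if_neg hc, if_neg hns] at hmul
        norm_num at hmul
      obtain ⟨s, hs⟩ := hsq
      refine ⟨s, ?_, ?_⟩
      · intro h0; rw [h0, mul_zero] at hs; exact hc hs
      · rw [hfact, hs, sq]
    · rintro ⟨s, hs0, hs⟩
      have hc : (u + 1) * (u - 1) ≠ 0 := by
        rw [← hfact, ← hs]; exact pow_ne_zero 2 hs0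
      have ha : (u + 1 : F) ≠ 0 := fun h => hc (by rw [h, zero_mul])
      have hb : (u - 1 : F) ≠ 0 := fun h => hc (by rw [h, mul_zero])
      have hmul : qchar ((u + 1) * (u - 1)) = 1 := by
        unfold qchar
        rw [if_neg hc, if_pos ⟨s, by rw [← sq, hs, hfact]⟩]
      rw [qchar_mul] at hmul
      rcases qchar_pm ha with h1 | h1 <;> rcases qchar_pm hb with h2' | h2' <;>
        rw [h1, h2'] at hmul ⊢ <;> simp_all
  have hfilter : (Finset.univ.filter fun u : F =>
        qchar (u + 1) = qchar (u - 1) ∧ qchar (u + 1) ≠ 0)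
      = Finset.univ.filter (fun u : F => ∃ s : F, s ≠ 0 ∧ s ^ 2 = u ^ 2 - 1) := by
    apply Finset.filter_congr
    intro u _
    exact hcond u
  rw [hfilter]
  set A := Finset.univ.filter (fun u : F => ∃ s : F, s ≠ 0 ∧ s ^ 2 = u ^ 2 - 1) with hA
  set T := Finset.univ.filter
      (fun p : F × F => p.1 ^ 2 - p.2 ^ 2 = 1 ∧ p.2 ≠ 0) with hT
  -- counting T fiberwise over A
  have hTA : T.card = 2 * A.card := by
    have hmaps : ∀ p ∈ T, p.1 ∈ A := by
      intro p hp
      rw [hT, Finset.mem_filter] at hp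
      rw [hA, Finset.mem_filter]
      exact ⟨Finset.mem_univ _, ⟨p.2, hp.2.2, by linear_combination (-1 : F) * hp.2.1⟩⟩
    rw [Finset.card_eq_sum_card_fiberwise hmaps]
    rw [Finset.sum_congr rfl (g := fun _ => 2) ?_]
    · rw [Finset.sum_const, smul_eq_mul, mul_comm]
    · intro u hu
      rw [hA, Finset.mem_filter] at hu
      obtain ⟨s, hs0, hs⟩ := hu.2
      have hss : s ≠ -s := by
        intro h
        apply hs0
        have : (2 : F) * s = 0 := by rw [two_mul]; nth_rewrite 2 [h]; ring
        rcases mul_eq_zero.mp this with h' | h'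
        · exact absurd h' h2
        · exact h'
      have hfib : T.filter (fun p => p.1 = u) = {(u, s), (u, -s)} := by
        ext p
        rw [Finset.mem_filter, hT, Finset.mem_filter]
        simp only [Finset.mem_univ, true_and, Finset.mem_insert, Finset.mem_singleton]
        constructor
        · rintro ⟨⟨hp1, hp2⟩, hp3⟩
          have hsq : p.2 ^ 2 = s ^ 2 := by
            linear_combination -hp1 - hs + (p.1 + u) * hp3
          rcases sq_eq_sq_iff_eq_or_eq_neg.mp hsq with h' | h'
          · left; rw [← hp3, ← h']
          · right; rw [← hp3, ← h']
        · rintro (h' | h')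
          · rw [h']
            exact ⟨⟨by linear_combination -hs, hs0⟩, rfl⟩
          · rw [h']
            exact ⟨⟨by linear_combination -hs, neg_ne_zero.mpr hs0⟩, rfl⟩
      rw [hfib]
      rw [Finset.card_insert_of_notMem (by simp [hss]), Finset.card_singleton]
  -- counting T via the bijection t ↦ ((t + t⁻¹)/2, (t - t⁻¹)/2)
  set B := Finset.univ.filter (fun t : F => t ≠ 0 ∧ t ≠ 1 ∧ t ≠ -1) with hB
  have hm1 : (-1 : F) ≠ 1 := Ring.neg_one_ne_one_of_char_ne_two hchar
  have hBcard : B.card = q - 3 := by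
    have : B = Finset.univ \ ({0, 1, -1} : Finset F) := by
      ext t
      rw [hB]
      simp [Finset.mem_sdiff, and_assoc]
    rw [this, Finset.card_sdiff_of_subset (Finset.subset_univ _), Finset.card_univ]
    congr 1
    have h01 : (0 : F) ∉ ({1, -1} : Finset F) := by
      simp only [Finset.mem_insert, Finset.mem_singleton]
      push_neg
      exact ⟨fun h => one_ne_zero h.symm, fun h => one_ne_zero (neg_eq_zero.mp h.symm)⟩
    have h1m1 : (1 : F) ∉ ({-1} : Finset F) := by
      simp only [Finset.mem_singleton]
      exact Ne.symm hm1
    rw [Finset.card_insert_of_notMem h01, Finset.card_insert_of_notMem h1m1,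
      Finset.card_singleton]
  have hTB : T.card = B.card := by
    refine (Finset.card_bij (fun (t : F) (_ : t ∈ B) => ((t + t⁻¹) / 2, (t - t⁻¹) / 2))
      ?_ ?_ ?_).symm
    · intro t ht
      rw [hB, Finset.mem_filter] at ht
      obtain ⟨-, ht0, ht1, htm1⟩ := ht
      rw [hT, Finset.mem_filter]
      refine ⟨Finset.mem_univ _, ?_, ?_⟩
      · field_simp
        ring
      · intro h
        rcases div_eq_zero_iff.mp h with h' | h'
        · have heqinv : t = t⁻¹ := sub_eq_zero.mp h'
          have ht2 : t * t = 1 := by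
            nth_rewrite 2 [heqinv]
            exact mul_inv_cancel₀ ht0
          have hfac : (t - 1) * (t + 1) = 0 := by linear_combination ht2
          rcases mul_eq_zero.mp hfac with h'' | h''
          · exact ht1 (sub_eq_zero.mp h'')
          · exact htm1 (eq_neg_of_add_eq_zero_left h'')
        · exact h2 h'
    · intro t1 h1 t2 h2' heq
      simp only [Prod.mk.injEq] at heq
      have comb : ∀ t : F, (t + t⁻¹) / 2 + (t - t⁻¹) / 2 = t := by
        intro t
        rw [← add_div, show t + t⁻¹ + (t - t⁻¹) = 2 * t from by ring,
          mul_div_cancel_left₀ _ h2]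
      rw [← comb t1, ← comb t2, heq.1, heq.2]
    · intro p hp
      rw [hT, Finset.mem_filter] at hp
      obtain ⟨-, hp1, hp2⟩ := hp
      have hprod : (p.1 + p.2) * (p.1 - p.2) = 1 := by linear_combination hp1
      have ht0 : p.1 + p.2 ≠ 0 := by
        intro h; rw [h, zero_mul] at hprod; exact one_ne_zero hprod.symm
      have htinv : (p.1 + p.2)⁻¹ = p.1 - p.2 := inv_eq_of_mul_eq_one_right hprod
      have hself : p.1 + p.2 ≠ p.1 - p.2 := by
        intro h
        apply hp2
        have : (2 : F) * p.2 = 0 := by linear_combination h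
        rcases mul_eq_zero.mp this with h' | h'
        · exact absurd h' h2
        · exact h'
      refine ⟨p.1 + p.2, ?_, ?_⟩
      · rw [hB, Finset.mem_filter]
        refine ⟨Finset.mem_univ _, ht0, ?_, ?_⟩
        · intro h
          apply hself
          rw [h, ← htinv, h, inv_one]
        · intro h
          apply hself
          rw [h, ← htinv, h]
          norm_num
      · have e1 : (p.1 + p.2 + (p.1 + p.2)⁻¹) / 2 = p.1 := by
          rw [htinv, show p.1 + p.2 + (p.1 - p.2) = 2 * p.1 from by ring,
            mul_div_cancel_left₀ _ h2]
        have e2 : (p.1 + p.2 - (p.1 + p.2)⁻¹) / 2 = p.2 := by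
          rw [htinv, show p.1 + p.2 - (p.1 - p.2) = 2 * p.2 from by ring,
            mul_div_cancel_left₀ _ h2]
        exact Prod.ext e1 e2
  -- conclude
  have hq3 : 3 ≤ q := by omega
  have hqodd : q % 2 = 1 := by omega
  have : 2 * A.card = q - 3 := by rw [← hTA, hTB, hBcard]
  omega
end

section
/- Let p be a prime with p^n ≡ 3 (mod 4), q = p^n ≥ 7, and f(x) = x^{q-2} over F_q. If q ≡ 2 (mod 3) and p ≠ 3, then f has differential uniformity 2; i.e., for every a ∈ F_q* and b ∈ F_q, the equation (x+a)^{q-2} - x^{q-2} = b has at most 2 solutions x ∈ F_q, and this bound 2 is attained for some (a,b). -/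
open Finset
open scoped Classical

/-- A finset of elements all satisfying a quadratic equation has at most 2 elements. -/
lemma quad_card_le {F : Type*} [Field F] (s : Finset F) (A B C : F) (hA : A ≠ 0)
    (h : ∀ x ∈ s, A * x ^ 2 + B * x + C = 0) : s.card ≤ 2 := by
  classical
  set P : Polynomial F := Polynomial.C A * Polynomial.X ^ 2 + Polynomial.C B * Polynomial.X +
    Polynomial.C C with hP
  have hPne : P ≠ 0 := by
    intro h0
    apply hA
    have := congrArg (fun q => Polynomial.coeff q 2) h0
    simpa [hP, Polynomial.coeff_add, Polynomial.coeff_C] using this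
  have hsub : s ⊆ P.roots.toFinset := by
    intro x hx
    rw [Multiset.mem_toFinset, Polynomial.mem_roots hPne]
    have := h x hx
    simp [Polynomial.IsRoot, hP, this]
  calc s.card ≤ P.roots.toFinset.card := Finset.card_le_card hsub
    _ ≤ Multiset.card P.roots := Multiset.toFinset_card_le _
    _ ≤ P.natDegree := Polynomial.card_roots' P
    _ ≤ 2 := Polynomial.natDegree_quadratic_le

theorem stmt_7 {F : Type*} [Field F] [Fintype F] (p n : ℕ)
    (hp : p.Prime) (hn : 0 < n) (hcard : Fintype.card F = p ^ n)
    (hq4 : p ^ n % 4 = 3) (hq7 : 7 ≤ p ^ n)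
    (hq3 : p ^ n % 3 = 2) (hp3 : p ≠ 3) :
    (∀ a b : F, a ≠ 0 →
      (Finset.univ.filter fun x : F =>
        (x + a) ^ (Fintype.card F - 2) - x ^ (Fintype.card F - 2) = b).card ≤ 2) ∧
    (∃ a b : F, a ≠ 0 ∧
      (Finset.univ.filter fun x : F =>
        (x + a) ^ (Fintype.card F - 2) - x ^ (Fintype.card F - 2) = b).card = 2) := by
  have hq7' : 7 ≤ Fintype.card F := hcard ▸ hq7
  have hq3' : Fintype.card F % 3 = 2 := hcard ▸ hq3
  -- the power map is the inverse map
  have hpow : ∀ x : F, x ^ (Fintype.card F - 2) = x⁻¹ := by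
    intro x
    rcases eq_or_ne x 0 with rfl | hx
    · rw [inv_zero, zero_pow]; omega
    · have h1 : x ^ (Fintype.card F - 2) * x = 1 := by
        rw [← pow_succ]
        have he : Fintype.card F - 2 + 1 = Fintype.card F - 1 := by omega
        rw [he, FiniteField.pow_card_sub_one_eq_one x hx]
      exact (inv_eq_of_mul_eq_one_left h1).symm
  -- 3 ≠ 0 in F
  have h3F : (3 : F) ≠ 0 := by
    intro h
    have hd3 : ringChar F ∣ 3 := by
      have := (CharP.cast_eq_zero_iff F (ringChar F) 3).mp (by exact_mod_cast h)
      exact this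
    have hrp : (ringChar F).Prime := CharP.char_is_prime F (ringChar F)
    have hr3 : ringChar F = 3 := by
      rcases (Nat.Prime.eq_one_or_self_of_dvd (by norm_num) _ hd3) with h1 | h1
      · exact absurd h1 hrp.ne_one
      · exact h1
    have hdq : ringChar F ∣ Fintype.card F :=
      (CharP.cast_eq_zero_iff F (ringChar F) (Fintype.card F)).mp
        (FiniteField.cast_card_eq_zero F)
    rw [hr3] at hdq
    omega
  -- cube roots of unity are trivial
  have hcube : ∀ x : F, x ^ 3 = 1 → x = 1 := by
    intro x hx
    have hx0 : x ≠ 0 := by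
      intro h; rw [h] at hx; simp at hx
    have h1 : orderOf x ∣ 3 := orderOf_dvd_of_pow_eq_one hx
    have h2 : orderOf x ∣ Fintype.card F - 1 :=
      orderOf_dvd_of_pow_eq_one (FiniteField.pow_card_sub_one_eq_one x hx0)
    rcases (Nat.Prime.eq_one_or_self_of_dvd (by norm_num) _ h1) with h | h
    · exact orderOf_eq_one_iff.mp h
    · rw [h] at h2; omega
  -- key: any nonzero solution of the "ab=1" quadratic gives a contradiction
  have hkey : ∀ a x : F, a ≠ 0 → x ^ 2 + a * x + a ^ 2 = 0 → False := by
    intro a x ha hq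
    have hx3 : x ^ 3 = a ^ 3 := by linear_combination (x - a) * hq
    have hu : (x * a⁻¹) ^ 3 = 1 := by
      field_simp
      linear_combination hx3
    have hxa : x = a := by
      have := hcube _ hu
      field_simp at this
      exact this
    rw [hxa] at hq
    have : (3 : F) * a ^ 2 = 0 := by linear_combination hq
    rcases mul_eq_zero.mp this with h | h
    · exact h3F h
    · exact ha (pow_eq_zero_iff (by norm_num) |>.mp h)
  constructor
  · intro a b ha
    have hset : (Finset.univ.filter fun x : F =>
        (x + a) ^ (Fintype.card F - 2) - x ^ (Fintype.card F - 2) = b) =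
        (Finset.univ.filter fun x : F => (x + a)⁻¹ - x⁻¹ = b) := by
      apply Finset.filter_congr
      intro x _
      rw [hpow, hpow]
    rw [hset]
    rcases eq_or_ne b 0 with rfl | hb
    · -- no solutions
      have : (Finset.univ.filter fun x : F => (x + a)⁻¹ - x⁻¹ = 0) = ∅ := by
        apply Finset.filter_false_of_mem
        intro x _
        intro h
        have h' : (x + a)⁻¹ = x⁻¹ := sub_eq_zero.mp h
        have := inv_injective h'
        apply ha
        linear_combination this
      rw [this]; simp
    rcases eq_or_ne (a * b) 1 with hab | hab
    · -- b = a⁻¹ : solutions are exactly {0, -a}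
      have hsub : (Finset.univ.filter fun x : F => (x + a)⁻¹ - x⁻¹ = b) ⊆ {0, -a} := by
        intro x hx
        rw [Finset.mem_filter] at hx
        obtain ⟨-, hx⟩ := hx
        by_contra hmem
        simp only [Finset.mem_insert, Finset.mem_singleton] at hmem
        push_neg at hmem
        obtain ⟨hx0, hxa⟩ := hmem
        have hxa' : x + a ≠ 0 := fun h => hxa (by linear_combination h)
        have hq : b * x ^ 2 + a * b * x + a = 0 := by
          field_simp at hx
          linear_combination -hx
        have hq2 : x ^ 2 + a * x + a ^ 2 = 0 := by
          have := congrArg (fun t => a * t) hq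
          simp only [mul_zero] at this
          linear_combination this - (x^2 + a*x) * hab
        exact hkey a x ha hq2
      calc _ ≤ ({0, -a} : Finset F).card := Finset.card_le_card hsub
        _ ≤ 2 := Finset.card_le_two
    · -- generic case: solutions satisfy a quadratic
      apply quad_card_le _ b (a * b) a hb
      intro x hx
      rw [Finset.mem_filter] at hx
      obtain ⟨-, hx⟩ := hx
      have hx0 : x ≠ 0 := by
        intro h; rw [h] at hx; simp at hx
        apply hab
        rw [← hx]; field_simp
      have hxa' : x + a ≠ 0 := by
        intro h
        have hxv : x = -a := by linear_combination h
        rw [hxv] at hx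
        simp at hx
        apply hab
        rw [← hx]
        field_simp
      field_simp at hx
      linear_combination -hx
  · -- existence: a = 1, b = 1
    refine ⟨1, 1, one_ne_zero, ?_⟩
    have hset : (Finset.univ.filter fun x : F =>
        (x + 1) ^ (Fintype.card F - 2) - x ^ (Fintype.card F - 2) = 1) =
        ({0, -1} : Finset F) := by
      ext x
      simp only [Finset.mem_filter, Finset.mem_univ, true_and, Finset.mem_insert,
        Finset.mem_singleton, hpow]
      constructor
      · intro hx
        by_contra hmem
        push_neg at hmem
        obtain ⟨hx0, hx1⟩ := hmem
        have hxa' : x + 1 ≠ 0 := fun h => hx1 (by linear_combination h)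
        have hq : x ^ 2 + x + 1 = 0 := by
          field_simp at hx
          linear_combination -hx
        have hq2 : x ^ 2 + (1 : F) * x + (1 : F) ^ 2 = 0 := by linear_combination hq
        exact hkey 1 x one_ne_zero hq2
      · rintro (rfl | rfl) <;> norm_num
    rw [hset]
    rw [Finset.card_insert_of_notMem (by simp), Finset.card_singleton]
end

section
/- Let q = p^n ≡ 3 (mod 4), q ≥ 7, u ∈ {1, -1}, and f_u(x) = u·x^{(q-1)/2-1} + x^{q-2} over F_q. For every a ∈ F_q*, the number of x ∈ F_q \ {0, -a} satisfying f_u(x+a) - f_u(x) = 0 equals (q-3)/4. -/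
open Finset
open scoped Classical

theorem stmt_10 {F : Type*} [Field F] [Fintype F] (p n : ℕ)
    (hp : p.Prime) (hn : 0 < n) (hcard : Fintype.card F = p ^ n)
    (hq4 : p ^ n % 4 = 3) (hq7 : 7 ≤ p ^ n) (u : F) (hu : u = 1 ∨ u = -1)
    (fu : F → F) (hfu : ∀ x, fu x = u * x ^ ((Fintype.card F - 1) / 2 - 1) + x ^ (Fintype.card F - 2))
    (a : F) (ha : a ≠ 0) :
    ((Finset.univ \ {0, -a} : Finset F).filter fun x => fu (x + a) - fu x = 0).card
      = (Fintype.card F - 3) / 4 := by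
  classical
  set q := Fintype.card F with hqdef
  have hq4' : q % 4 = 3 := by rw [hcard]; exact hq4
  have hq7' : 7 ≤ q := by rw [hcard]; exact hq7
  have hF2 : ringChar F ≠ 2 := by
    intro h
    have := FiniteField.even_card_of_char_two (F := F) h
    omega
  have hone : (1 : F) ≠ -1 := fun h => Ring.neg_one_ne_one_of_char_ne_two hF2 h.symm
  have h2 : (2 : F) ≠ 0 := Ring.two_ne_zero hF2
  set m := (q - 1) / 2 with hm
  have hm2 : q / 2 = m := by omega
  have hsq : ∀ x : F, x ≠ 0 → x ^ m = 1 ∨ x ^ m = -1 := by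
    intro x hx
    rw [← hm2]
    exact FiniteField.pow_dichotomy hF2 hx
  have heuler : ∀ x : F, ((quadraticChar F x : F)) = x ^ m := by
    intro x
    rw [quadraticChar_eq_pow_of_char_ne_two' hF2, ← hqdef, hm2]
  -- the sign ε
  set εz : ℤ := if u = 1 then -1 else 1 with hεz
  have hε1 : εz = 1 ∨ εz = -1 := by rw [hεz]; split <;> simp
  have hεF : (εz : F) = -u := by
    rcases hu with h | h
    · simp [hεz, h]
    · rw [hεz, if_neg (by rw [h]; exact fun hh => hone hh.symm), h]
      norm_num
  -- translating the character condition
  have key : ∀ y : F, y ≠ 0 → (quadraticChar F y = εz ↔ u * y ^ m + 1 = 0) := by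
    intro y hy
    have hcast : (quadraticChar F y : F) = (εz : F) ↔ u * y ^ m + 1 = 0 := by
      rw [heuler, hεF]
      constructor
      · intro h
        rw [h]
        rcases hu with h' | h' <;> rw [h'] <;> ring
      · intro h
        rcases hu with h' | h' <;> rw [h'] at h ⊢ <;>
          [linear_combination h; linear_combination -h]
    constructor
    · intro h
      rw [← hcast, h]
    · intro h
      have := hcast.mpr h
      rcases quadraticChar_dichotomy hy with h1 | h1 <;> rcases hε1 with h2 | h2 <;>
        rw [h1, h2] at this ⊢ <;> push_cast at this <;>
        first
          | rfl
          | exact absurd this hone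
          | exact absurd this.symm hone
  -- values of u * y^m + 1
  have hA : ∀ y : F, y ≠ 0 → u * y ^ m + 1 = 0 ∨ u * y ^ m + 1 = 2 := by
    intro y hy
    rcases hu with h | h <;> subst h <;> rcases hsq y hy with h' | h' <;> rw [h'] <;> norm_num
  -- rewrite fu
  have hfu' : ∀ y : F, y ≠ 0 → fu y = (u * y ^ m + 1) * y⁻¹ := by
    intro y hy
    have hy1 : y ^ (q - 1) = 1 := by
      rw [hqdef]; exact FiniteField.pow_card_sub_one_eq_one y hy
    have e0 : y ^ (m - 1) * y = y ^ m := by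
      rw [← pow_succ]; congr 1; omega
    have e1 : y ^ (m - 1) = y ^ m * y⁻¹ := by
      rw [← e0, mul_assoc, mul_inv_cancel₀ hy, mul_one]
    have e2 : y ^ (q - 2) = y⁻¹ := by
      rw [inv_eq_one_div, eq_div_iff hy, ← pow_succ, show q - 2 + 1 = q - 1 by omega]
      exact hy1
    rw [hfu, e1, e2]
    ring
  -- the condition equivalence
  have hcond : ∀ x ∈ (Finset.univ \ {0, -a} : Finset F),
      (fu (x + a) - fu x = 0 ↔
        (quadraticChar F x = εz ∧ quadraticChar F (x + a) = εz)) := by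
    intro x hx
    simp only [Finset.mem_sdiff, Finset.mem_insert, Finset.mem_singleton, Finset.mem_univ,
      true_and] at hx
    push_neg at hx
    obtain ⟨hx0, hxa'⟩ := hx
    have hxa : x + a ≠ 0 := fun h => hxa' (by linear_combination h)
    rw [key x hx0, key (x + a) hxa, hfu' _ hxa, hfu' _ hx0, sub_eq_zero,
      ← div_eq_mul_inv, ← div_eq_mul_inv, div_eq_div_iff hxa hx0]
    constructor
    · intro h
      rcases hA (x + a) hxa with hs | hs <;> rcases hA x hx0 with ht | ht <;>
        rw [hs, ht] at h
      · exact ⟨ht, hs⟩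
      · exact absurd ((mul_eq_zero.mp (show (2 : F) * (x + a) = 0 by
          linear_combination -h)).resolve_left h2) hxa
      · exact absurd ((mul_eq_zero.mp (show (2 : F) * x = 0 by
          linear_combination h)).resolve_left h2) hx0
      · exact absurd ((mul_eq_zero.mp (show (2 : F) * a = 0 by
          linear_combination -h)).resolve_left h2) ha
    · rintro ⟨ht, hs⟩
      rw [hs, ht]
      ring
  rw [Finset.filter_congr hcond]
  set S0 : Finset F := Finset.univ \ {0, -a} with hS0
  set T : Finset F := S0.filter
    (fun x => quadraticChar F x = εz ∧ quadraticChar F (x + a) = εz) with hT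
  have h0a : (0 : F) ≠ -a := fun h => ha (neg_eq_zero.mp h.symm)
  have hmemS0 : ∀ x ∈ S0, x ≠ 0 ∧ x + a ≠ 0 := by
    intro x hx
    simp only [hS0, Finset.mem_sdiff, Finset.mem_insert, Finset.mem_singleton,
      Finset.mem_univ, true_and] at hx
    push_neg at hx
    exact ⟨hx.1, fun h => hx.2 (by linear_combination h)⟩
  have hε2 : εz * εz = 1 := by rcases hε1 with h | h <;> rw [h] <;> norm_num
  -- cardinality of S0
  have hcardS0 : S0.card = q - 2 := by
    rw [hS0, Finset.card_sdiff_of_subset (Finset.subset_univ _), Finset.card_univ,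
      Finset.card_pair h0a]
  -- the three character sums
  have hsum0 : ∑ x : F, quadraticChar F x = 0 := quadraticChar_sum_zero hF2
  have hpair : ∑ x ∈ ({0, -a} : Finset F), quadraticChar F x
      = quadraticChar F (-a) := by
    rw [Finset.sum_pair h0a, quadraticChar_zero, zero_add]
  have hS1 : ∑ x ∈ S0, quadraticChar F x = -(quadraticChar F (-a)) := by
    rw [hS0, Finset.sum_sdiff_eq_sub (Finset.subset_univ _), hsum0, hpair, zero_sub]
  have hS2 : ∑ x ∈ S0, quadraticChar F (x + a) = -(quadraticChar F a) := by
    have htot : ∑ x : F, quadraticChar F (x + a) = 0 := by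
      exact (Fintype.sum_equiv (Equiv.addRight a) (fun x => quadraticChar F (x + a))
        (quadraticChar F) (fun x => rfl)).trans hsum0
    have hpair2 : ∑ x ∈ ({0, -a} : Finset F), quadraticChar F (x + a)
        = quadraticChar F a := by
      rw [Finset.sum_pair h0a, zero_add, neg_add_cancel, quadraticChar_zero, add_zero]
    rw [hS0, Finset.sum_sdiff_eq_sub (Finset.subset_univ _), htot, hpair2, zero_sub]
  have hS3 : ∑ x ∈ S0, quadraticChar F x * quadraticChar F (x + a) = -1 := by
    have hsub : S0 ⊆ (Finset.univ \ {0} : Finset F) := by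
      intro x hx
      simp only [hS0, Finset.mem_sdiff, Finset.mem_insert, Finset.mem_singleton,
        Finset.mem_univ, true_and] at hx ⊢
      tauto
    have step0 : ∑ x ∈ S0, quadraticChar F x * quadraticChar F (x + a)
        = ∑ x ∈ S0, quadraticChar F (x * (x + a)) :=
      Finset.sum_congr rfl fun x _ => (map_mul (quadraticChar F) x (x + a)).symm
    have step1 : ∑ x ∈ S0, quadraticChar F (x * (x + a))
        = ∑ x ∈ (Finset.univ \ {0} : Finset F), quadraticChar F (x * (x + a)) := by
      apply Finset.sum_subset hsub
      intro x hx hnx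
      have hx0 : x ≠ 0 := by
        simp only [Finset.mem_sdiff, Finset.mem_singleton, Finset.mem_univ, true_and] at hx
        exact hx
      have hxa : x = -a := by
        simp only [hS0, Finset.mem_sdiff, Finset.mem_insert, Finset.mem_singleton,
          Finset.mem_univ, true_and, not_not] at hnx
        tauto
      rw [hxa, neg_add_cancel, mul_zero]
      exact quadraticChar_zero
    have step2 : ∑ x ∈ (Finset.univ \ {0} : Finset F), quadraticChar F (x * (x + a))
        = ∑ x ∈ (Finset.univ \ {0} : Finset F), quadraticChar F (1 + a * x⁻¹) := by
      apply Finset.sum_congr rfl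
      intro x hx
      have hx0 : x ≠ 0 := by
        simp only [Finset.mem_sdiff, Finset.mem_singleton, Finset.mem_univ, true_and] at hx
        exact hx
      rw [show x * (x + a) = (1 + a * x⁻¹) * x ^ 2 by field_simp, map_mul,
        quadraticChar_sq_one' hx0, mul_one]
    have step3 : ∑ x ∈ (Finset.univ \ {0} : Finset F), quadraticChar F (1 + a * x⁻¹)
        = ∑ y ∈ (Finset.univ \ {1} : Finset F), quadraticChar F y := by
      refine Finset.sum_nbij' (fun x => 1 + a * x⁻¹) (fun y => a * (y - 1)⁻¹) ?_ ?_ ?_ ?_ ?_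
      · intro x hx
        simp only [Finset.mem_sdiff, Finset.mem_singleton, Finset.mem_univ, true_and] at hx ⊢
        intro h
        have : a * x⁻¹ = 0 := by linear_combination h
        rcases mul_eq_zero.mp this with h' | h'
        · exact ha h'
        · exact hx (inv_eq_zero.mp h')
      · intro y hy
        simp only [Finset.mem_sdiff, Finset.mem_singleton, Finset.mem_univ, true_and] at hy ⊢
        intro h
        rcases mul_eq_zero.mp h with h' | h'
        · exact ha h'
        · exact hy (by
            have : y - 1 = 0 := by
              by_contra hc
              exact (inv_ne_zero hc) h'
            linear_combination this)
      · intro x hx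
        simp only [Finset.mem_sdiff, Finset.mem_singleton, Finset.mem_univ, true_and] at hx
        field_simp
        rw [show x + a - x = a by ring, div_self ha]
      · intro y hy
        simp only [Finset.mem_sdiff, Finset.mem_singleton, Finset.mem_univ, true_and] at hy
        have hy1 : y - 1 ≠ 0 := fun h => hy (by linear_combination h)
        field_simp
        ring
      · intro x _
        rfl
    have step4 : ∑ y ∈ (Finset.univ \ {1} : Finset F), quadraticChar F y = -1 := by
      rw [Finset.sum_sdiff_eq_sub (Finset.subset_univ _), hsum0, Finset.sum_singleton,
        map_one, zero_sub]
    rw [step0, step1, step2, step3, step4]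
  -- the big character sum
  have hbig : ∑ x ∈ S0, (1 + εz * quadraticChar F x) * (1 + εz * quadraticChar F (x + a))
      = (q : ℤ) - 3 := by
    have expand : ∀ x : F, (1 + εz * quadraticChar F x) * (1 + εz * quadraticChar F (x + a))
        = 1 + εz * quadraticChar F x + εz * quadraticChar F (x + a)
          + (εz * εz) * (quadraticChar F x * quadraticChar F (x + a)) := fun x => by ring
    rw [Finset.sum_congr rfl fun x _ => expand x, Finset.sum_add_distrib,
      Finset.sum_add_distrib, Finset.sum_add_distrib, ← Finset.mul_sum, ← Finset.mul_sum,
      ← Finset.mul_sum, hS1, hS2, hS3, Finset.sum_const, hcardS0, hε2]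
    have hneg : quadraticChar F (-a) = -(quadraticChar F a) := by
      have hm1 : quadraticChar F (-1) = -1 := by
        apply quadraticChar_neg_one_iff_not_isSquare.mpr
        rw [FiniteField.isSquare_neg_one_iff]
        simp only [ne_eq, not_not]
        exact hq4'
      rw [show (-a : F) = -1 * a by ring, map_mul, hm1, neg_one_mul]
    rw [hneg, nsmul_eq_mul, mul_one, Nat.cast_sub (by omega : 2 ≤ q)]
    push_cast
    ring
  -- the sum equals 4 * T.card
  have hTsum : ∑ x ∈ S0, (1 + εz * quadraticChar F x) * (1 + εz * quadraticChar F (x + a))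
      = 4 * T.card := by
    rw [← Finset.sum_filter_add_sum_filter_not S0
      (fun x => quadraticChar F x = εz ∧ quadraticChar F (x + a) = εz), ← hT]
    have hTpart : ∑ x ∈ T, (1 + εz * quadraticChar F x) * (1 + εz * quadraticChar F (x + a))
        = 4 * T.card := by
      rw [Finset.sum_congr rfl (g := fun _ => (4 : ℤ)) (fun x hx => by
        rw [hT, Finset.mem_filter] at hx
        rw [hx.2.1, hx.2.2, hε2]
        norm_num), Finset.sum_const, nsmul_eq_mul, mul_comm]
    have hNpart : ∑ x ∈ S0.filter
        (fun x => ¬(quadraticChar F x = εz ∧ quadraticChar F (x + a) = εz)),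
        (1 + εz * quadraticChar F x) * (1 + εz * quadraticChar F (x + a)) = 0 := by
      apply Finset.sum_eq_zero
      intro x hx
      rw [Finset.mem_filter] at hx
      obtain ⟨hxS, hnx⟩ := hx
      obtain ⟨hx0, hxa⟩ := hmemS0 x hxS
      have hzero : ∀ c : ℤ, (c = 1 ∨ c = -1) → c ≠ εz → 1 + εz * c = 0 := by
        intro c hc hne
        rcases hc with h | h <;> rcases hε1 with h' | h'
        · exact absurd (h.trans h'.symm) hne
        · rw [h, h']; norm_num
        · rw [h, h']; norm_num
        · exact absurd (h.trans h'.symm) hne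
      rw [not_and_or] at hnx
      rcases hnx with h | h
      · rw [hzero _ (quadraticChar_dichotomy hx0) h, zero_mul]
      · rw [hzero _ (quadraticChar_dichotomy hxa) h, mul_zero]
    rw [hTpart, hNpart, add_zero]
  rw [hTsum] at hbig
  omega
end

section
/- Let q = p^n ≡ 3 (mod 4), q ≥ 7, and u ∈ F_q with χ(u+1) ≠ χ(u-1), u ∉ {0, 1, -1} (in particular u+1 and u-1 nonzero). Then for every a ∈ F_q*, there is no x ∈ F_q \ {0, -a} satisfying f_u(x+a) - f_u(x) = 0, where f_u(x) = u·x^{(q-1)/2-1} + x^{q-2}. -/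
open Finset
open scoped Classical

theorem stmt_11 {F : Type*} [Field F] [Fintype F] (p n : ℕ)
    (hp : p.Prime) (hn : 0 < n) (hcard : Fintype.card F = p ^ n)
    (hq4 : p ^ n % 4 = 3) (hq7 : 7 ≤ p ^ n) (u : F)
    (hu : qchar (u + 1) ≠ qchar (u - 1)) (hu0 : u ≠ 0) (hu1 : u ≠ 1) (hum1 : u ≠ -1)
    (fu : F → F) (hfu : ∀ x, fu x = u * x ^ ((Fintype.card F - 1) / 2 - 1) + x ^ (Fintype.card F - 2))
    (a : F) (ha : a ≠ 0) :
    ((Finset.univ \ {0, -a} : Finset F).filter fun x => fu (x + a) - fu x = 0).card = 0 := by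
  set q := Fintype.card F with hqdef
  have hq : q = p ^ n := hcard
  have hq4' : q % 4 = 3 := by rw [hq]; exact hq4
  have hq7' : 7 ≤ q := by rw [hq]; exact hq7
  have hqodd : q % 2 = 1 := by omega
  have hchar : ringChar F ≠ 2 := by
    intro h
    have := FiniteField.even_card_of_char_two h
    omega
  have h2 : (2 : F) ≠ 0 := Ring.two_ne_zero hchar
  have hneg1 : (-1 : F) ≠ 1 := Ring.neg_one_ne_one_of_char_ne_two hchar
  set k := (q - 1) / 2 with hkdef
  have hk2 : q / 2 = k := by omega
  have hkodd : Odd k := by rw [Nat.odd_iff]; omega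
  have hk1 : 1 ≤ k := by omega
  -- dichotomy in terms of k
  have dich : ∀ v : F, v ≠ 0 → v ^ k = 1 ∨ v ^ k = -1 := by
    intro v hv
    have := FiniteField.pow_dichotomy hchar hv
    rwa [hk2] at this
  have sq_iff : ∀ v : F, v ≠ 0 → (IsSquare v ↔ v ^ k = 1) := by
    intro v hv
    have := FiniteField.isSquare_iff hchar hv
    rwa [hk2] at this
  have pow_inv : ∀ v : F, v ≠ 0 → v ^ (q - 2) = v⁻¹ := by
    intro v hv
    have h1 : v ^ (q - 2) * v = 1 := by
      rw [← pow_succ]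
      have : q - 2 + 1 = q - 1 := by omega
      rw [this]
      exact FiniteField.pow_card_sub_one_eq_one v hv
    rw [mul_comm] at h1
    exact eq_inv_of_mul_eq_one_right h1
  -- key: fu v * v = u * v^k + 1 for v ≠ 0
  have key : ∀ v : F, v ≠ 0 → fu v * v = u * v ^ k + 1 := by
    intro v hv
    have hsplit : v ^ (k - 1) * v = v ^ k := by
      rw [← pow_succ]
      congr 1
      omega
    rw [hfu v, pow_inv v hv, add_mul, inv_mul_cancel₀ hv, mul_assoc, hsplit]
  -- translate hu : exactly one of u+1, u-1 is a square
  have hup : u + 1 ≠ 0 := by intro h; apply hum1; linear_combination h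
  have hum : u - 1 ≠ 0 := by intro h; apply hu1; linear_combination h
  have hprod_um : (u + 1) ^ k * (u - 1) ^ k = -1 := by
    rcases sq_iff (u+1) hup with h1
    rcases sq_iff (u-1) hum with h2'
    rcases dich (u+1) hup with e1 | e1 <;> rcases dich (u-1) hum with e2 | e2
    · exfalso; apply hu
      unfold qchar
      rw [if_neg hup, if_neg hum, if_pos (h1.mpr e1), if_pos (h2'.mpr e2)]
    · rw [e1, e2]; ring
    · rw [e1, e2]; ring
    · exfalso; apply hu
      unfold qchar
      rw [if_neg hup, if_neg hum,
        if_neg (fun hs => hneg1 (e1 ▸ (h1.mp hs).symm ▸ rfl)),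
        if_neg (fun hs => hneg1 (e2 ▸ (h2'.mp hs).symm ▸ rfl))]
  rw [Finset.card_eq_zero, Finset.filter_eq_empty_iff]
  intro x hx
  simp only [Finset.mem_sdiff, Finset.mem_insert, Finset.mem_singleton, Finset.mem_univ,
    true_and, not_or] at hx
  obtain ⟨hx0, hxna⟩ := hx
  have hxa : x + a ≠ 0 := by
    intro h; apply hxna; linear_combination h
  intro heq
  have heq' : fu (x + a) = fu x := by linear_combination heq
  -- main equation
  have E : (u * (x+a) ^ k + 1) * x = (u * x ^ k + 1) * (x + a) := by
    rw [← key (x+a) hxa, ← key x hx0, heq']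
    ring
  set s := x ^ k with hsdef
  set t := (x + a) ^ k with htdef
  have hs : s = 1 ∨ s = -1 := dich x hx0
  have ht : t = 1 ∨ t = -1 := dich (x+a) hxa
  have hs2 : s * s = 1 := by rcases hs with h | h <;> rw [h] <;> ring
  -- case s = t
  by_cases hst : s = t
  · have hEa : (u * s + 1) * a = 0 := by
      linear_combination -E - u * x * hst
    have : u * s + 1 = 0 := by
      rcases mul_eq_zero.mp hEa with h | h
      · exact h
      · exact absurd h ha
    rcases hs with h | h
    · apply hum1; rw [h] at this; linear_combination this
    · apply hu1; rw [h] at this; linear_combination -this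
  · -- then t = -s
    have hts : t = -s := by
      rcases hs with h | h <;> rcases ht with h' | h' <;>
        simp [h, h'] at hst ⊢
    rw [hts] at E
    -- derive 2usx = -(us+1)a and 2us(x+a) = (us-1)a
    have h4 : 2 * u * s * x = -((u * s + 1) * a) := by linear_combination -E
    have h5 : 2 * u * s * (x + a) = (u * s - 1) * a := by linear_combination h4
    have hmul : (2 * u * s * x) * (2 * u * s * (x + a)) = -((u*s+1)*a) * ((u*s-1)*a) := by
      rw [h4, h5]
    have hP : (2 * u) ^ 2 * (x * (x + a)) = (1 - u ^ 2) * a ^ 2 := by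
      linear_combination hmul - (4 * u^2 * (x * (x+a)) + u^2 * a^2) * hs2
    -- raise to k
    have hPk : ((2 * u) ^ 2 * (x * (x + a))) ^ k = ((1 - u ^ 2) * a ^ 2) ^ k := by
      rw [hP]
    have h2u : (2 * u : F) ≠ 0 := mul_ne_zero h2 hu0
    have h2uk : ((2 * u) ^ k) ^ 2 = 1 := by
      rcases dich (2*u) h2u with h | h <;> rw [h] <;> ring
    have hak : (a ^ k) ^ 2 = 1 := by
      rcases dich a ha with h | h <;> rw [h] <;> ring
    have hLHS : ((2 * u) ^ 2 * (x * (x + a))) ^ k = -1 := by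
      have hL1 : ((2 * u) ^ 2 * (x * (x + a))) ^ k
          = ((2 * u) ^ k) ^ 2 * (x ^ k * (x + a) ^ k) := by
        rw [mul_pow, pow_right_comm, mul_pow x (x + a) k]
      rw [hL1, ← hsdef, ← htdef, hts]
      linear_combination (-(s * s)) * h2uk - hs2
    have hRHS : ((1 - u ^ 2) * a ^ 2) ^ k = 1 := by
      have h1u : ((1 - u ^ 2) * a ^ 2 : F) ^ k
          = ((-1 : F) ^ k) * ((u + 1) ^ k * (u - 1) ^ k) * ((a ^ k) ^ 2) := by
        rw [show ((1 - u ^ 2) * a ^ 2 : F) = (-1) * ((u + 1) * (u - 1)) * a ^ 2 by ring]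
        rw [mul_pow, mul_pow, mul_pow, pow_right_comm]
      rw [h1u, hkodd.neg_one_pow, hprod_um, hak]
      ring
    rw [hPk, hRHS] at hLHS
    exact hneg1 hLHS.symm
end

section
/- Let q = p^n ≡ 3 (mod 4), q ≥ 7, and u ∈ F_q with χ(u+1) = χ(u-1) ≠ 0. Then for every a ∈ F_q*, there is exactly one x ∈ F_q \ {0, -a} satisfying f_u(x+a) - f_u(x) = 0, where f_u(x) = u·x^{(q-1)/2-1} + x^{q-2}. -/
open Finset
open scoped Classical

theorem stmt_12 {F : Type*} [Field F] [Fintype F] (p n : ℕ)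
    (hp : p.Prime) (hn : 0 < n) (hcard : Fintype.card F = p ^ n)
    (hq4 : p ^ n % 4 = 3) (hq7 : 7 ≤ p ^ n) (u : F)
    (hu : qchar (u + 1) = qchar (u - 1)) (hu0 : qchar (u + 1) ≠ 0)
    (fu : F → F) (hfu : ∀ x, fu x = u * x ^ ((Fintype.card F - 1) / 2 - 1) + x ^ (Fintype.card F - 2))
    (a : F) (ha : a ≠ 0) :
    ((Finset.univ \ {0, -a} : Finset F).filter fun x => fu (x + a) - fu x = 0).card = 1 := by
  have hq3 : Fintype.card F % 4 = 3 := by rw [hcard]; exact hq4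
  have hq7' : 7 ≤ Fintype.card F := by rw [hcard]; exact hq7
  set q := Fintype.card F with hqdef
  set k := (q - 1) / 2 with hkdef
  have hk2 : 2 * k + 1 = q := by omega
  have hkodd : Odd k := by rw [Nat.odd_iff]; omega
  have hk1 : 1 ≤ k := by omega
  -- -1 is not a square
  have hns : ¬ IsSquare (-1 : F) := by
    rw [FiniteField.isSquare_neg_one_iff]
    exact not_not.mpr hq3
  have h1n : (1 : F) ≠ -1 := fun h => hns (h ▸ (⟨1, (mul_one 1).symm⟩ : IsSquare (1 : F)))
  have h2 : (2 : F) ≠ 0 := by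
    intro h; apply h1n; linear_combination h
  have hchar : ringChar F ≠ 2 := by
    intro h
    have hc := ringChar.Nat.cast_ringChar (R := F)
    rw [h] at hc
    exact h2 (by exact_mod_cast hc)
  -- basic facts about the power map y ↦ y^k
  have hpow : ∀ y : F, y ≠ 0 → y ^ k = 1 ∨ y ^ k = -1 := by
    intro y hy
    have h1 : y ^ (q - 1) = 1 := FiniteField.pow_card_sub_one_eq_one y hy
    have hmm : (y ^ k) * (y ^ k) = 1 := by
      rw [← pow_add, show k + k = q - 1 by omega]; exact h1
    exact mul_self_eq_one_iff.mp hmm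
  have hsqr : ∀ y : F, y ≠ 0 → (y * y) ^ k = 1 := by
    intro y hy
    rcases hpow y hy with h | h <;> rw [mul_pow, h] <;> ring
  have hneg1 : (-1 : F) ^ k = -1 := hkodd.neg_one_pow
  have heuler : ∀ y : F, y ≠ 0 → (IsSquare y ↔ y ^ k = 1) := by
    intro y hy
    rw [FiniteField.isSquare_iff hchar hy, show q / 2 = k by omega]
  -- consequences of the hypotheses on u
  have hu1 : u + 1 ≠ 0 := by
    intro h; apply hu0; simp [qchar, h]
  have hu2 : u - 1 ≠ 0 := by
    intro h; rw [hu] at hu0; apply hu0; simp [qchar, h]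
  have hs : (u + 1) ^ k = (u - 1) ^ k := by
    rcases hpow _ hu1 with h1 | h1 <;> rcases hpow _ hu2 with h2 | h2 <;> rw [h1, h2]
    · have i1 : IsSquare (u + 1) := (heuler _ hu1).mpr h1
      have i2 : ¬ IsSquare (u - 1) := by
        intro hsq
        have hq' := (heuler _ hu2).mp hsq
        rw [h2] at hq'
        exact h1n hq'.symm
      simp [qchar, hu1, hu2, i1, i2] at hu
    · have i1 : ¬ IsSquare (u + 1) := by
        intro hsq
        have hq' := (heuler _ hu1).mp hsq
        rw [h1] at hq'
        exact h1n hq'.symm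
      have i2 : IsSquare (u - 1) := (heuler _ hu2).mpr h2
      simp [qchar, hu1, hu2, i1, i2] at hu
  have hss : (u + 1) ^ k * (u - 1) ^ k = 1 := by
    rw [hs, ← mul_pow]; exact hsqr _ hu2
  have hu0' : u ≠ 0 := by
    rintro rfl
    rw [show (0 : F) + 1 = 1 by ring, show (0 : F) - 1 = -1 by ring, one_pow, hneg1] at hs
    exact h1n hs
  have h2u : 2 * u ≠ 0 := mul_ne_zero h2 hu0'
  -- the two candidate solutions
  set x₁ : F := -(a * (u + 1)) / (2 * u) with hx₁def
  have hz : x₁ + a = a * (u - 1) / (2 * u) := by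
    rw [hx₁def]; field_simp; ring
  have hx10 : x₁ ≠ 0 := by
    rw [hx₁def]
    exact div_ne_zero (neg_ne_zero.mpr (mul_ne_zero ha hu1)) h2u
  have hx1a : x₁ + a ≠ 0 := by
    rw [hz]; exact div_ne_zero (mul_ne_zero ha hu2) h2u
  -- key product formula
  have hprod : x₁ ^ k * (x₁ + a) ^ k = -1 := by
    have hmul : x₁ * (x₁ + a) = -1 * ((a / (2 * u)) * (a / (2 * u))) * ((u + 1) * (u - 1)) := by
      rw [hz, hx₁def]; field_simp
    rw [← mul_pow, hmul, mul_pow, mul_pow, hneg1, hsqr _ (div_ne_zero ha h2u), mul_pow, hss]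
    ring
  -- the core reformulation of the equation
  have hfueq : ∀ x : F, x ≠ 0 → x + a ≠ 0 →
      (fu (x + a) - fu x = 0 ↔ (u * (x + a) ^ k + 1) * x = (u * x ^ k + 1) * (x + a)) := by
    intro x hx hxa
    have key : ∀ y : F, y ≠ 0 → fu y = (u * y ^ k + 1) / y := by
      intro y hy
      rw [hfu, eq_div_iff hy, add_mul, mul_assoc, ← pow_succ, ← pow_succ,
        show k - 1 + 1 = k by omega, show q - 2 + 1 = q - 1 by omega,
        FiniteField.pow_card_sub_one_eq_one y hy]
    rw [key _ hxa, key _ hx, sub_eq_zero, div_eq_div_iff hxa hx]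
  rw [Finset.card_eq_one]
  rcases hpow x₁ hx10 with hc1 | hc1
  · -- x₁ is the unique solution
    have hc2 : (x₁ + a) ^ k = -1 := by
      have := hprod; rw [hc1, one_mul] at this; exact this
    refine ⟨x₁, ?_⟩
    ext x
    simp only [Finset.mem_filter, Finset.mem_sdiff, Finset.mem_univ, true_and,
      Finset.mem_insert, Finset.mem_singleton, not_or]
    constructor
    · rintro ⟨⟨hx0, hxna⟩, hE⟩
      have hxa : x + a ≠ 0 := fun h => hxna (by linear_combination h)
      rw [hfueq x hx0 hxa] at hE
      rcases hpow x hx0 with e | e <;> rcases hpow (x + a) hxa with e' | e' <;>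
          rw [e, e'] at hE
      · exfalso
        have hz0 : (u + 1) * a = 0 := by linear_combination -hE
        rcases mul_eq_zero.mp hz0 with h' | h'
        exacts [hu1 h', ha h']
      · -- x = x₁
        rw [hx₁def, eq_div_iff h2u]
        linear_combination -hE
      · -- x = -(x₁ + a), contradiction with e
        exfalso
        have hxv : x = -(x₁ + a) := by
          rw [hz, neg_div', eq_div_iff h2u]
          linear_combination hE
        rw [hxv, show -(x₁ + a) = -1 * (x₁ + a) by ring, mul_pow, hneg1, hc2] at e
        exact h1n (by linear_combination e)
      · exfalso
        have hz0 : (u - 1) * a = 0 := by linear_combination hE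
        rcases mul_eq_zero.mp hz0 with h' | h'
        exacts [hu2 h', ha h']
    · rintro rfl
      refine ⟨⟨hx10, fun h => hx1a (by linear_combination h)⟩, ?_⟩
      rw [hfueq x₁ hx10 hx1a, hc1, hc2, hz, hx₁def]
      field_simp
      ring
  · -- -(x₁ + a) is the unique solution
    have hc2 : (x₁ + a) ^ k = 1 := by
      have h' := hprod; rw [hc1] at h'
      linear_combination -h'
    have hy0 : -(x₁ + a) ≠ 0 := neg_ne_zero.mpr hx1a
    have hya : -(x₁ + a) + a ≠ 0 := by
      rw [show -(x₁ + a) + a = -x₁ by ring]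
      exact neg_ne_zero.mpr hx10
    have hyk : (-(x₁ + a)) ^ k = -1 := by
      rw [show -(x₁ + a) = -1 * (x₁ + a) by ring, mul_pow, hneg1, hc2]; ring
    have hyak : (-(x₁ + a) + a) ^ k = 1 := by
      rw [show -(x₁ + a) + a = -1 * x₁ by ring, mul_pow, hneg1, hc1]; ring
    refine ⟨-(x₁ + a), ?_⟩
    ext x
    simp only [Finset.mem_filter, Finset.mem_sdiff, Finset.mem_univ, true_and,
      Finset.mem_insert, Finset.mem_singleton, not_or]
    constructor
    · rintro ⟨⟨hx0, hxna⟩, hE⟩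
      have hxa : x + a ≠ 0 := fun h => hxna (by linear_combination h)
      rw [hfueq x hx0 hxa] at hE
      rcases hpow x hx0 with e | e <;> rcases hpow (x + a) hxa with e' | e' <;>
          rw [e, e'] at hE
      · exfalso
        have hz0 : (u + 1) * a = 0 := by linear_combination -hE
        rcases mul_eq_zero.mp hz0 with h' | h'
        exacts [hu1 h', ha h']
      · -- x = x₁, contradiction with e and hc1
        exfalso
        have hxv : x = x₁ := by
          rw [hx₁def, eq_div_iff h2u]
          linear_combination -hE
        rw [hxv, hc1] at e
        exact h1n e.symm
      · -- x = -(x₁ + a)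
        rw [hz, neg_div', eq_div_iff h2u]
        linear_combination hE
      · exfalso
        have hz0 : (u - 1) * a = 0 := by linear_combination hE
        rcases mul_eq_zero.mp hz0 with h' | h'
        exacts [hu2 h', ha h']
    · rintro rfl
      refine ⟨⟨hy0, fun h => hya (by linear_combination h)⟩, ?_⟩
      rw [hfueq _ hy0 hya, hyk, hyak, show -(x₁ + a) + a = -x₁ by ring, hz, hx₁def]
      field_simp
      ring
end

section
/- Let q = p^n ≡ 3 (mod 4), q ≥ 7, p > 3, and u = 4/5 ∈ F_q. Then there is no pair (a,b) ∈ F_q* × F_q with χ((9/5)ab) = -1, χ(a²b² - (36/5)ab) = 1, χ(a²b² - (4/5)ab) = 1, χ(a²b² - 4ab + 64/25) = 1, and χ((16/5)ab - 64/25) = 1. -/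
open Finset
open scoped Classical

theorem stmt_14 {F : Type*} [Field F] [Fintype F] (p n : ℕ)
    (hp : p.Prime) (hn : 0 < n) (hcard : Fintype.card F = p ^ n)
    (hq4 : p ^ n % 4 = 3) (hq7 : 7 ≤ p ^ n) (hp3 : 3 < p) (hp5 : p ≠ 5)
    (u : F) (hu : u = 4 / 5) :
    ¬∃ a b : F, a ≠ 0 ∧
      qchar ((9 / 5 : F) * a * b) = -1 ∧
      qchar (a ^ 2 * b ^ 2 - (36 / 5 : F) * a * b) = 1 ∧
      qchar (a ^ 2 * b ^ 2 - (4 / 5 : F) * a * b) = 1 ∧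
      qchar (a ^ 2 * b ^ 2 - 4 * a * b + (64 / 25 : F)) = 1 ∧
      qchar ((16 / 5 : F) * a * b - (64 / 25 : F)) = 1 := by
  rintro ⟨a, b, ha, h1, h2, h3, h4, h5⟩
  haveI : Fact p.Prime := ⟨hp⟩
  -- ringChar F = p
  have hdvd : p ∣ ringChar F := (prime_dvd_char_iff_dvd_card p).mpr
    (hcard ▸ dvd_pow_self p hn.ne')
  have hrc0 : ringChar F ≠ 0 := CharP.char_ne_zero_of_finite F (ringChar F)
  have hrcprime : (ringChar F).Prime := by
    rcases CharP.char_is_prime_or_zero F (ringChar F) with h | h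
    · exact h
    · exact absurd h hrc0
  have hrc : ringChar F = p := ((Nat.prime_dvd_prime_iff_eq hp hrcprime).mp hdvd).symm
  haveI hcp : CharP F p := hrc ▸ ringChar.charP F
  have h5ne : (5 : F) ≠ 0 := by
    intro h
    have h' : ((5 : ℕ) : F) = 0 := by exact_mod_cast h
    have hd := (CharP.cast_eq_zero_iff F p 5).mp h'
    exact hp5 ((Nat.prime_dvd_prime_iff_eq hp (by norm_num)).mp hd)
  have h12ne : (12 : F) ≠ 0 := by
    intro h
    have h' : ((12 : ℕ) : F) = 0 := by exact_mod_cast h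
    have hd := (CharP.cast_eq_zero_iff F p 12).mp h'
    have hle := Nat.le_of_dvd (by norm_num) hd
    interval_cases p <;> revert hd hp <;> decide
  have h25ne : (25 : F) ≠ 0 := by
    have : (25 : F) = 5 * 5 := by norm_num
    rw [this]
    exact mul_ne_zero h5ne h5ne
  have hqc : ∀ x : F, qchar x = quadraticChar F x := by
    intro x
    simp only [qchar, quadraticChar_apply, quadraticCharFun]
    by_cases hx : x = 0 <;> by_cases hs : IsSquare x <;> simp [hx, hs]
  have key : ((9 / 5 : F) * a * b) * ((16 / 5 : F) * a * b - (64 / 25 : F))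
      = (12 / 5 : F) ^ 2 * (a ^ 2 * b ^ 2 - (4 / 5 : F) * a * b) := by
    field_simp [h25ne]
    ring
  have hm : qchar (((9 / 5 : F) * a * b) * ((16 / 5 : F) * a * b - (64 / 25 : F))) = -1 := by
    rw [hqc, map_mul, ← hqc, ← hqc, h1, h5]
    ring
  have hsqne : (12 / 5 : F) ≠ 0 := div_ne_zero h12ne h5ne
  have hsq : qchar (((12 / 5 : F)) ^ 2 * (a ^ 2 * b ^ 2 - (4 / 5 : F) * a * b)) = 1 := by
    rw [hqc, map_mul, ← hqc, ← hqc, h3]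
    have h2' : qchar ((12 / 5 : F) ^ 2) = 1 := by
      rw [hqc]
      exact_mod_cast quadraticChar_sq_one' hsqne
    rw [h2']
    ring
  rw [key, hsq] at hm
  exact absurd hm (by norm_num)
end

section
/- Let q = p^n ≡ 3 (mod 4) with q > 19, and u ∈ F_q with χ(u+1) = χ(u-1) = χ(5u+3) = χ(5u-3) (all ±1). Then the generalized Ness–Helleseth function f_u(x) = u·x^{(q-1)/2-1} + x^{q-2} has differential uniformity 3: every derivative equation f_u(x+a) - f_u(x) = b (a ≠ 0) has at most 3 solutions, and some pair (a,b) achieves exactly 3 solutions. -/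
open Finset
open scoped Classical

namespace NHAux

variable {F : Type*} [Field F] [Fintype F]

/-- Context bundling all standing hypotheses about the field and parameter `v`. -/
structure Ctx (F : Type*) [Field F] [Fintype F] (v : F) : Prop where
  hF2 : ringChar F ≠ 2
  hq3 : Fintype.card F % 4 = 3
  hq19 : 19 < Fintype.card F
  hv1 : v + 1 ≠ 0
  hv2 : v - 1 ≠ 0
  hv3 : 5*v + 3 ≠ 0
  hv4 : 5*v - 3 ≠ 0
  he1 : (v+1) ^ (Fintype.card F / 2) = (v-1) ^ (Fintype.card F / 2)
  he2 : (v-1) ^ (Fintype.card F / 2) = (5*v+3) ^ (Fintype.card F / 2)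
  he3 : (5*v+3) ^ (Fintype.card F / 2) = (5*v-3) ^ (Fintype.card F / 2)

noncomputable def nh (v y : F) : F :=
  v * y ^ (Fintype.card F / 2 - 1) + y ^ (Fintype.card F - 2)

noncomputable def Sol (v c : F) : Finset F :=
  univ.filter fun y : F => nh v (y+1) - nh v y = c

section basic

variable {v : F}

lemma Ctx.two_ne (h : Ctx F v) : (2 : F) ≠ 0 := Ring.two_ne_zero h.hF2

lemma Ctx.neg_one_ne_one (h : Ctx F v) : (-1 : F) ≠ 1 :=
  Ring.neg_one_ne_one_of_char_ne_two h.hF2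

lemma Ctx.M_odd (h : Ctx F v) : Odd (Fintype.card F / 2) := by
  have := h.hq3; rw [Nat.odd_iff]; omega

lemma Ctx.M_pos (h : Ctx F v) : 0 < Fintype.card F / 2 := by
  have := h.hq19; omega

lemma Ctx.M1_even (h : Ctx F v) : Even (Fintype.card F / 2 - 1) := by
  have := h.hq3; have := h.hq19; rw [Nat.even_iff]; omega

lemma Ctx.q2_odd (h : Ctx F v) : Odd (Fintype.card F - 2) := by
  have := h.hq3; have := h.hq19; rw [Nat.odd_iff]; omega

/-- χ(-1) = -1 -/
lemma Ctx.chi_neg_one (h : Ctx F v) : (-1 : F) ^ (Fintype.card F / 2) = -1 :=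
  h.M_odd.neg_one_pow

lemma Ctx.chi_zero (h : Ctx F v) : (0 : F) ^ (Fintype.card F / 2) = 0 :=
  zero_pow h.M_pos.ne'

lemma Ctx.chi_dichot (h : Ctx F v) {y : F} (hy : y ≠ 0) :
    y ^ (Fintype.card F / 2) = 1 ∨ y ^ (Fintype.card F / 2) = -1 :=
  FiniteField.pow_dichotomy h.hF2 hy

lemma Ctx.chi_ne_zero (h : Ctx F v) {y : F} (hy : y ≠ 0) :
    y ^ (Fintype.card F / 2) ≠ 0 := pow_ne_zero _ hy

lemma Ctx.chi_neg (h : Ctx F v) (y : F) :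
    (-y) ^ (Fintype.card F / 2) = - y ^ (Fintype.card F / 2) := h.M_odd.neg_pow y

lemma Ctx.ne_zero_of_chi_neg_one (h : Ctx F v) {y : F}
    (hy : y ^ (Fintype.card F / 2) = -1) : y ≠ 0 := by
  intro h0; rw [h0, h.chi_zero] at hy
  exact neg_ne_zero.mpr one_ne_zero hy.symm

lemma Ctx.ne_zero_of_chi_one (h : Ctx F v) {y : F}
    (hy : y ^ (Fintype.card F / 2) = 1) : y ≠ 0 := by
  intro h0; rw [h0, h.chi_zero] at hy
  exact one_ne_zero hy.symm

/-- the common character value σ -/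
noncomputable def Ctx.σ (_ : Ctx F v) : F := (v+1) ^ (Fintype.card F / 2)

lemma Ctx.sigma_ne (h : Ctx F v) : h.σ ≠ 0 := pow_ne_zero _ h.hv1

lemma Ctx.sigma_sq (h : Ctx F v) : h.σ * h.σ = 1 := by
  rcases h.chi_dichot h.hv1 with h1 | h1 <;> rw [Ctx.σ, h1] <;> ring

lemma Ctx.hv0 (h : Ctx F v) : v ≠ 0 := by
  intro h0
  have h1 := h.he1
  rw [h0] at h1
  simp only [zero_add, zero_sub, zero_mul, one_pow] at h1
  rw [h.chi_neg, one_pow] at h1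
  exact h.neg_one_ne_one (by linear_combination -h1)

/-- χ(1-v) = -σ -/
lemma Ctx.chi_one_sub (h : Ctx F v) : (1 - v) ^ (Fintype.card F / 2) = -h.σ := by
  have : (1 - v) = -(v - 1) := by ring
  rw [this, h.chi_neg, ← h.he1]; rfl

lemma Ctx.cancel_sigma (h : Ctx F v) {x y : F} (hxy : h.σ * x = h.σ * y) : x = y :=
  mul_left_cancel₀ h.sigma_ne hxy

/-- Negating v preserves the context. -/
lemma Ctx.neg (h : Ctx F v) : Ctx F (-v) := by
  have e1 : -v + 1 = -(v - 1) := by ring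
  have e2 : -v - 1 = -(v + 1) := by ring
  have e3 : 5 * -v + 3 = -(5*v - 3) := by ring
  have e4 : 5 * -v - 3 = -(5*v + 3) := by ring
  refine ⟨h.hF2, h.hq3, h.hq19, ?_, ?_, ?_, ?_, ?_, ?_, ?_⟩
  · rw [e1]; exact neg_ne_zero.mpr h.hv2
  · rw [e2]; exact neg_ne_zero.mpr h.hv1
  · rw [e3]; exact neg_ne_zero.mpr h.hv4
  · rw [e4]; exact neg_ne_zero.mpr h.hv3
  · rw [e1, e2, h.chi_neg, h.chi_neg, ← h.he1]
  · rw [e2, e3, h.chi_neg, h.chi_neg, (h.he1.trans h.he2).trans h.he3]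
  · rw [e3, e4, h.chi_neg, h.chi_neg, ← h.he3]

end basic

section core

variable {v : F}

lemma Ctx.nh_zero (h : Ctx F v) : nh v (0 : F) = 0 := by
  have h1 : Fintype.card F / 2 - 1 ≠ 0 := by have := h.hq19; omega
  have h2 : Fintype.card F - 2 ≠ 0 := by have := h.hq19; omega
  rw [nh, zero_pow h1, zero_pow h2]; ring

/-- evaluation: y · nh v y = v·χ(y) + 1 for y ≠ 0. -/
lemma Ctx.mul_nh (h : Ctx F v) {y : F} (hy : y ≠ 0) :
    y * nh v y = v * y ^ (Fintype.card F / 2) + 1 := by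
  have h1 : y ^ (Fintype.card F / 2 - 1) * y = y ^ (Fintype.card F / 2) := by
    rw [← pow_succ]; congr 1; have := h.hq19; omega
  have h2 : y ^ (Fintype.card F - 2) * y = 1 := by
    rw [← pow_succ]
    have e : Fintype.card F - 2 + 1 = Fintype.card F - 1 := by have := h.hq19; omega
    rw [e]; exact FiniteField.pow_card_sub_one_eq_one y hy
  rw [nh]; linear_combination v * h1 + h2

/-- parity: nh v (-y) = - nh (-v) y. -/
lemma Ctx.nh_neg (h : Ctx F v) (y : F) : nh v (-y) = - nh (-v) y := by
  rw [nh, nh, h.M1_even.neg_pow, h.q2_odd.neg_pow]; ring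

lemma Ctx.nh_one (h : Ctx F v) : nh v (1 : F) = v + 1 := by
  rw [nh, one_pow, one_pow]; ring

lemma Ctx.nh_neg_one (h : Ctx F v) : nh v (-1 : F) = v - 1 := by
  have : (-1 : F) = -(1 : F) := by norm_num
  rw [this, h.nh_neg, nh, one_pow, one_pow]; ring

/-- key quadratic relation for interior solutions. -/
lemma Ctx.key (h : Ctx F v) {y c : F} (hy0 : y ≠ 0) (hy1 : y + 1 ≠ 0)
    (hyc : nh v (y+1) - nh v y = c) :
    c * (y * (y+1)) = (v * (y+1) ^ (Fintype.card F / 2) + 1) * y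
      - (v * y ^ (Fintype.card F / 2) + 1) * (y+1) := by
  have e1 := h.mul_nh hy0
  have e2 := h.mul_nh hy1
  linear_combination (-(y * (y+1))) * hyc + y * e2 - (y+1) * e1

/-- membership in Sol, unfolded -/
lemma mem_Sol {v c y : F} : y ∈ Sol v c ↔ nh v (y+1) - nh v y = c := by
  rw [Sol, mem_filter]; simp

lemma Ctx.zero_mem_iff (h : Ctx F v) {c : F} : (0 : F) ∈ Sol v c ↔ c = v + 1 := by
  rw [mem_Sol, zero_add, h.nh_one, h.nh_zero]
  constructor <;> intro hh <;> linear_combination -hh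

lemma Ctx.neg_one_mem_iff (h : Ctx F v) {c : F} : (-1 : F) ∈ Sol v c ↔ c = 1 - v := by
  rw [mem_Sol, neg_add_cancel, h.nh_zero, h.nh_neg_one]
  constructor <;> intro hh <;> linear_combination -hh

/-- v*s + 1 ≠ 0 for s = ±1. -/
lemma Ctx.vs_ne (h : Ctx F v) {s : F} (hs : s = 1 ∨ s = -1) : v * s + 1 ≠ 0 := by
  rcases hs with rfl | rfl
  · intro h0; exact h.hv1 (by linear_combination h0)
  · intro h0; exact h.hv2 (by linear_combination -h0)

lemma Ctx.chi_mul3 (h : Ctx F v) (a b c : F) :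
    (a*(b*c)) ^ (Fintype.card F / 2)
      = a ^ (Fintype.card F / 2) * (b ^ (Fintype.card F / 2) * c ^ (Fintype.card F / 2)) := by
  rw [mul_pow, mul_pow]

lemma Ctx.sigma_ne_neg' (h : Ctx F v) :
    (v+1) ^ (Fintype.card F / 2) ≠ -((v+1) ^ (Fintype.card F / 2)) := by
  intro he
  have h2 : (2:F) * (v+1) ^ (Fintype.card F / 2) = 0 := by linear_combination he
  rcases mul_eq_zero.mp h2 with h3 | h3
  · exact h.two_ne h3
  · exact pow_ne_zero _ h.hv1 h3

lemma Ctx.chi_one_sub' (h : Ctx F v) :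
    (1 - v) ^ (Fintype.card F / 2) = -((v+1) ^ (Fintype.card F / 2)) := by
  have e : (1 - v) = -(v - 1) := by ring
  rw [e, h.chi_neg, ← h.he1]

section classes

variable {v c : F}

/-- class of "pure" interior solutions: χ(y) = χ(y+1). -/
def P1 (v c y : F) : Prop :=
  (nh v (y+1) - nh v y = c) ∧ y ≠ 0 ∧ y + 1 ≠ 0 ∧
    y ^ (Fintype.card F / 2) = (y+1) ^ (Fintype.card F / 2)

def P2 (v c y : F) : Prop :=
  (nh v (y+1) - nh v y = c) ∧ y ≠ 0 ∧ y + 1 ≠ 0 ∧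
    y ^ (Fintype.card F / 2) = 1 ∧ (y+1) ^ (Fintype.card F / 2) = -1

def P3 (v c y : F) : Prop :=
  (nh v (y+1) - nh v y = c) ∧ y ≠ 0 ∧ y + 1 ≠ 0 ∧
    y ^ (Fintype.card F / 2) = -1 ∧ (y+1) ^ (Fintype.card F / 2) = 1

lemma Ctx.P1_key (h : Ctx F v) {y : F} (hy : P1 v c y) :
    c * (y * (y+1)) = -(v * y ^ (Fintype.card F / 2) + 1) := by
  obtain ⟨heq, hy0, hy1, hst⟩ := hy
  have k := h.key hy0 hy1 heq
  rw [← hst] at k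
  linear_combination k

lemma Ctx.P1_opp (h : Ctx F v) {y y' : F} (hy : P1 v c y) (hy' : P1 v c y')
    (hχ : y ^ (Fintype.card F / 2) = 1) (hχ' : y' ^ (Fintype.card F / 2) = -1) : False := by
  have ky := h.P1_key hy
  have ky' := h.P1_key hy'
  rw [hχ] at ky; rw [hχ'] at ky'
  have c1 : (c * (y * (y+1))) ^ (Fintype.card F / 2)
      = (-(v * 1 + 1)) ^ (Fintype.card F / 2) := by rw [ky]
  have c1' : (c * (y' * (y'+1))) ^ (Fintype.card F / 2)
      = (-(v * (-1) + 1)) ^ (Fintype.card F / 2) := by rw [ky']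
  rw [h.chi_mul3, ← hy.2.2.2, hχ] at c1
  rw [h.chi_mul3, ← hy'.2.2.2, hχ'] at c1'
  have e1 : (-(v * 1 + 1) : F) = -(v+1) := by ring
  have e2 : (-(v * (-1) + 1) : F) = -(1 - v) := by ring
  rw [e1, h.chi_neg] at c1
  rw [e2, h.chi_neg, h.chi_one_sub'] at c1'
  -- c1 : c^M * (1*1) = -(v+1)^M,  c1' : c^M * (-1 * -1) = --(v+1)^M
  exact h.sigma_ne_neg' (by linear_combination c1 - c1')

lemma Ctx.P1_unique (h : Ctx F v) {y y' : F} (hy : P1 v c y) (hy' : P1 v c y') : y = y' := by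
  by_contra hyy
  have ky := h.P1_key hy
  have ky' := h.P1_key hy'
  have hs := h.chi_dichot hy.2.1
  have hs' := h.chi_dichot hy'.2.1
  by_cases hss : y ^ (Fintype.card F / 2) = y' ^ (Fintype.card F / 2)
  · -- same sign: roots of the same quadratic, so y' = -(y+1), contradiction with signs
    have hc : c ≠ 0 := by
      intro h0
      rw [h0] at ky
      exact h.vs_ne hs (by linear_combination ky)
    rw [← hss] at ky'
    have hfac : (y - y') * (c * (y + y' + 1)) = (y - y') * 0 := by
      linear_combination ky - ky'
    have h3 := mul_left_cancel₀ (sub_ne_zero.mpr hyy) hfac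
    have h4 : y' = -(y+1) := by
      rcases mul_eq_zero.mp h3 with h5 | h5
      · exact absurd h5 hc
      · linear_combination h5
    have h5 : y' ^ (Fintype.card F / 2) = -(y+1) ^ (Fintype.card F / 2) := by
      rw [h4, h.chi_neg]
    rw [← hy.2.2.2, hss] at h5
    have h6 : (2:F) * y' ^ (Fintype.card F / 2) = 0 := by linear_combination h5
    rcases mul_eq_zero.mp h6 with h7 | h7
    · exact h.two_ne h7
    · exact h.chi_ne_zero hy'.2.1 h7
  · rcases hs with h1 | h1 <;> rcases hs' with h2 | h2
    · exact hss (h1.trans h2.symm)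
    · exact h.P1_opp hy hy' h1 h2
    · exact h.P1_opp hy' hy h2 h1
    · exact hss (h1.trans h2.symm)

lemma Ctx.P2_key (h : Ctx F v) {y : F} (hy : P2 v c y) :
    c * (y * (y+1)) = (1 - v) * y - (v + 1) * (y+1) := by
  obtain ⟨heq, hy0, hy1, hs, ht⟩ := hy
  have k := h.key hy0 hy1 heq
  rw [hs, ht] at k
  linear_combination k

lemma Ctx.P3_key (h : Ctx F v) {y : F} (hy : P3 v c y) :
    c * (y * (y+1)) = (v + 1) * y - (1 - v) * (y+1) := by
  obtain ⟨heq, hy0, hy1, hs, ht⟩ := hy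
  have k := h.key hy0 hy1 heq
  rw [hs, ht] at k
  linear_combination k

lemma Ctx.P2_unique (h : Ctx F v) {y y' : F} (hy : P2 v c y) (hy' : P2 v c y') : y = y' := by
  by_contra hyy
  have ky := h.P2_key hy
  have ky' := h.P2_key hy'
  have hfac : (y - y') * (c * (y + y' + 1)) = (y - y') * (-(2*v)) := by
    linear_combination ky - ky'
  have hstar := mul_left_cancel₀ (sub_ne_zero.mpr hyy) hfac
  have hprod : c * (y * y') = v + 1 := by linear_combination y * hstar - ky
  have hprod2 : c * ((y+1) * (y'+1)) = 1 - v := by linear_combination hprod + hstar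
  have c1 : (c * (y * y')) ^ (Fintype.card F / 2) = (v+1) ^ (Fintype.card F / 2) := by
    rw [hprod]
  have c2 : (c * ((y+1) * (y'+1))) ^ (Fintype.card F / 2)
      = (1-v) ^ (Fintype.card F / 2) := by rw [hprod2]
  rw [h.chi_mul3, hy.2.2.2.1, hy'.2.2.2.1] at c1
  rw [h.chi_mul3, hy.2.2.2.2, hy'.2.2.2.2, h.chi_one_sub'] at c2
  exact h.sigma_ne_neg' (by linear_combination c2 - c1)

lemma Ctx.P3_unique (h : Ctx F v) {y y' : F} (hy : P3 v c y) (hy' : P3 v c y') : y = y' := by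
  by_contra hyy
  have ky := h.P3_key hy
  have ky' := h.P3_key hy'
  have hfac : (y - y') * (c * (y + y' + 1)) = (y - y') * (2*v) := by
    linear_combination ky - ky'
  have hstar := mul_left_cancel₀ (sub_ne_zero.mpr hyy) hfac
  have hprod : c * (y * y') = 1 - v := by linear_combination y * hstar - ky
  have hprod2 : c * ((y+1) * (y'+1)) = 1 + v := by linear_combination hprod + hstar
  have c1 : (c * (y * y')) ^ (Fintype.card F / 2) = (1-v) ^ (Fintype.card F / 2) := by
    rw [hprod]
  have c2 : (c * ((y+1) * (y'+1))) ^ (Fintype.card F / 2)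
      = (1+v) ^ (Fintype.card F / 2) := by rw [hprod2]
  rw [h.chi_mul3, hy.2.2.2.1, hy'.2.2.2.1, h.chi_one_sub'] at c1
  rw [h.chi_mul3, hy.2.2.2.2, hy'.2.2.2.2] at c2
  have e : (1 + v : F) = v + 1 := by ring
  rw [e] at c2
  exact h.sigma_ne_neg' (by linear_combination c1 - c2)

/-- At c = v+1 there are no (+,-) interior solutions. -/
lemma Ctx.P2_empty (h : Ctx F v) {y : F} (hy : P2 v (v+1) y) : False := by
  have k := h.P2_key hy
  have hId : (v+1) * ((y+1)*(y+1)) = (1-v) * y := by linear_combination k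
  have c1 : ((v+1) * ((y+1)*(y+1))) ^ (Fintype.card F / 2)
      = ((1-v) * y) ^ (Fintype.card F / 2) := by rw [hId]
  rw [h.chi_mul3, hy.2.2.2.2, mul_pow, h.chi_one_sub', hy.2.2.2.1] at c1
  exact h.sigma_ne_neg' (by linear_combination c1)

end classes



end core

section counting

variable {v c : F}

lemma Ctx.classify (h : Ctx F v) {c y : F} (hy : y ∈ Sol v c) (h0 : y ≠ 0) (h1 : y ≠ -1) :
    P1 v c y ∨ P2 v c y ∨ P3 v c y := by
  rw [mem_Sol] at hy
  have hy1 : y + 1 ≠ 0 := fun hh => h1 (by linear_combination hh)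
  rcases h.chi_dichot h0 with a | a <;> rcases h.chi_dichot hy1 with b | b
  · exact Or.inl ⟨hy, h0, hy1, a.trans b.symm⟩
  · exact Or.inr (Or.inl ⟨hy, h0, hy1, a, b⟩)
  · exact Or.inr (Or.inr ⟨hy, h0, hy1, a, b⟩)
  · exact Or.inl ⟨hy, h0, hy1, a.trans b.symm⟩

lemma exists_rep {P : F → Prop} (hP : ∀ y y', P y → P y' → y = y') :
    ∃ z : F, ∀ y, P y → y = z := by
  by_cases hex : ∃ y, P y
  · obtain ⟨w, hw⟩ := hex
    exact ⟨w, fun y hy => hP y w hy hw⟩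
  · exact ⟨0, fun y hy => absurd ⟨y, hy⟩ hex⟩

lemma card_triple_le (z1 z2 z3 : F) : ({z1, z2, z3} : Finset F).card ≤ 3 := by
  refine le_trans (card_insert_le _ _) ?_
  refine le_trans (Nat.add_le_add_right (card_insert_le _ _) 1) ?_
  simp

lemma Ctx.card_le_generic (h : Ctx F v) (hc1 : c ≠ v + 1) (hc2 : c ≠ 1 - v) :
    (Sol v c).card ≤ 3 := by
  obtain ⟨z1, hz1⟩ := exists_rep (fun y y' hy hy' => h.P1_unique (c := c) hy hy')
  obtain ⟨z2, hz2⟩ := exists_rep (fun y y' hy hy' => h.P2_unique (c := c) hy hy')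
  obtain ⟨z3, hz3⟩ := exists_rep (fun y y' hy hy' => h.P3_unique (c := c) hy hy')
  have hsub : Sol v c ⊆ {z1, z2, z3} := by
    intro y hy
    have h0 : y ≠ 0 := by rintro rfl; exact hc1 (h.zero_mem_iff.mp hy)
    have h1 : y ≠ -1 := by rintro rfl; exact hc2 (h.neg_one_mem_iff.mp hy)
    simp only [mem_insert, mem_singleton]
    rcases h.classify hy h0 h1 with hP | hP | hP
    · exact Or.inl (hz1 y hP)
    · exact Or.inr (Or.inl (hz2 y hP))
    · exact Or.inr (Or.inr (hz3 y hP))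
  exact le_trans (card_le_card hsub) (card_triple_le z1 z2 z3)

lemma Ctx.card_le_special (h : Ctx F v) : (Sol v (v+1)).card ≤ 3 := by
  obtain ⟨z1, hz1⟩ := exists_rep (fun y y' hy hy' => h.P1_unique (c := v+1) hy hy')
  obtain ⟨z3, hz3⟩ := exists_rep (fun y y' hy hy' => h.P3_unique (c := v+1) hy hy')
  have hsub : Sol v (v+1) ⊆ {0, z1, z3} := by
    intro y hy
    simp only [mem_insert, mem_singleton]
    by_cases h0 : y = 0
    · exact Or.inl h0
    have h1 : y ≠ -1 := by
      rintro rfl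
      have := h.neg_one_mem_iff.mp hy
      have hv : (2:F) * v = 0 := by linear_combination this
      rcases mul_eq_zero.mp hv with hh | hh
      · exact h.two_ne hh
      · exact h.hv0 hh
    rcases h.classify hy h0 h1 with hP | hP | hP
    · exact Or.inr (Or.inl (hz1 y hP))
    · exact absurd hP (fun hp => h.P2_empty hp)
    · exact Or.inr (Or.inr (hz3 y hP))
  exact le_trans (card_le_card hsub) (card_triple_le _ _ _)

lemma Ctx.card_neg_eq (h : Ctx F v) (c : F) : (Sol v c).card = (Sol (-v) c).card := by
  apply Finset.card_nbij' (i := fun y => -1 - y) (j := fun x => -1 - x)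
  · intro y hy
    simp only [Finset.mem_coe] at hy ⊢
    rw [mem_Sol] at hy ⊢
    have e3 := h.neg.nh_neg y
    have e4 := h.neg.nh_neg (y+1)
    rw [neg_neg] at e3 e4
    have e1 : (-1 - y + 1 : F) = -y := by ring
    have e2 : (-1 - y : F) = -(y+1) := by ring
    rw [e1, e2, e3, e4]
    linear_combination hy
  · intro x hx
    simp only [Finset.mem_coe] at hx ⊢
    rw [mem_Sol] at hx ⊢
    have e3 := h.nh_neg x
    have e4 := h.nh_neg (x+1)
    have e1 : (-1 - x + 1 : F) = -x := by ring
    have e2 : (-1 - x : F) = -(x+1) := by ring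
    rw [e1, e2, e3, e4]
    linear_combination hx
  · intro a _; ring
  · intro a _; ring

/-- The master upper bound. -/
lemma Ctx.card_le3 (h : Ctx F v) (c : F) : (Sol v c).card ≤ 3 := by
  by_cases hc1 : c = v + 1
  · subst hc1; exact h.card_le_special
  by_cases hc2 : c = 1 - v
  · rw [h.card_neg_eq c]
    have e : c = -v + 1 := by rw [hc2]; ring
    rw [e]
    exact h.neg.card_le_special
  · exact h.card_le_generic hc1 hc2

end counting

section existence

variable {v : F}

lemma Ctx.pick (h : Ctx F v) {A B : F}
    (hAB : A ^ (Fintype.card F / 2) * B ^ (Fintype.card F / 2) = -1) :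
    ∃ a b : F, ((a = A ∧ b = B) ∨ (a = B ∧ b = A)) ∧
      a ^ (Fintype.card F / 2) = -1 ∧ b ^ (Fintype.card F / 2) = 1 := by
  have hA0 : A ≠ 0 := by
    rintro rfl
    rw [h.chi_zero, zero_mul] at hAB
    exact neg_ne_zero.mpr one_ne_zero hAB.symm
  rcases h.chi_dichot hA0 with hA | hA
  · have hB : B ^ (Fintype.card F / 2) = -1 := by rw [hA, one_mul] at hAB; exact hAB
    exact ⟨B, A, Or.inr ⟨rfl, rfl⟩, hB, hA⟩
  · have hB : B ^ (Fintype.card F / 2) = 1 := by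
      rw [hA] at hAB
      linear_combination -hAB
    exact ⟨A, B, Or.inl ⟨rfl, rfl⟩, hA, hB⟩

lemma Ctx.chi_prod_neg (h : Ctx F v) {a b : F} (hprod : (v+1) * (a * b) = 1 - v) :
    a ^ (Fintype.card F / 2) * b ^ (Fintype.card F / 2) = -1 := by
  have σne : (v+1) ^ (Fintype.card F / 2) ≠ 0 := pow_ne_zero _ h.hv1
  have c1 : ((v+1) * ((v+1) * (a*b))) ^ (Fintype.card F / 2)
      = ((v+1) * (1-v)) ^ (Fintype.card F / 2) := by rw [hprod]
  rw [h.chi_mul3, mul_pow, mul_pow, h.chi_one_sub'] at c1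
  have e : (v+1) ^ (Fintype.card F / 2) * -((v+1) ^ (Fintype.card F / 2))
      = (v+1) ^ (Fintype.card F / 2) * ((v+1) ^ (Fintype.card F / 2) * (-1)) := by ring
  rw [e] at c1
  exact mul_left_cancel₀ σne (mul_left_cancel₀ σne c1)

lemma Ctx.mem_of_quad (h : Ctx F v) {y c s t : F} (hy0 : y ≠ 0) (hy1 : y + 1 ≠ 0)
    (hs : y ^ (Fintype.card F / 2) = s) (ht : (y+1) ^ (Fintype.card F / 2) = t)
    (hq : c * (y * (y+1)) = (v*t + 1) * y - (v*s + 1) * (y+1)) : y ∈ Sol v c := by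
  rw [mem_Sol]
  have e1 := h.mul_nh hy0
  have e2 := h.mul_nh hy1
  rw [hs] at e1; rw [ht] at e2
  have key : (y*(y+1)) * (nh v (y+1) - nh v y) = (y*(y+1)) * c := by
    linear_combination y * e2 - (y+1) * e1 - hq
  exact mul_left_cancel₀ (mul_ne_zero hy0 hy1) key

lemma Ctx.exists_pure (h : Ctx F v) :
    ∃ y : F, y ∈ Sol v (v+1) ∧ y ^ (Fintype.card F / 2) = -1 ∧
      (y+1) ^ (Fintype.card F / 2) = -1 := by
  have hc : (v+1 : F) ≠ 0 := h.hv1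
  have hD : ((v+1) * (5*v-3)) ≠ 0 := mul_ne_zero hc h.hv4
  have hDchi : ((v+1) * (5*v-3)) ^ (Fintype.card F / 2) = 1 := by
    rw [mul_pow, ← (h.he1.trans h.he2).trans h.he3]
    rcases h.chi_dichot hc with hs | hs <;> rw [hs] <;> norm_num
  obtain ⟨w, hw⟩ := (FiniteField.isSquare_iff h.hF2 hD).mpr hDchi
  have h2c : (2*(v+1) : F) ≠ 0 := mul_ne_zero h.two_ne hc
  set q1 : F := (-(v+1) + w) / (2*(v+1)) with hq1
  set q2 : F := (-(v+1) - w) / (2*(v+1)) with hq2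
  have hsum : q1 + q2 = -1 := by rw [hq1, hq2, ← add_div, div_eq_iff h2c]; ring
  have hprod : (v+1) * (q1 * q2) = 1 - v := by
    rw [hq1, hq2, div_mul_div_comm, mul_div_assoc', div_eq_iff (mul_ne_zero h2c h2c)]
    linear_combination (v+1) * hw
  obtain ⟨a, b, hab, ha, hb⟩ := h.pick (h.chi_prod_neg hprod)
  have hfacts : a + b = -1 ∧ (v+1) * (a*b) = 1 - v := by
    rcases hab with ⟨rfl, rfl⟩ | ⟨rfl, rfl⟩
    · exact ⟨hsum, hprod⟩
    · exact ⟨by linear_combination hsum, by linear_combination hprod⟩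
  obtain ⟨hab1, hab2⟩ := hfacts
  have ha0 : a ≠ 0 := h.ne_zero_of_chi_neg_one ha
  have hb0 : b ≠ 0 := h.ne_zero_of_chi_one hb
  have ha1 : a + 1 = -b := by linear_combination hab1
  have ha1' : a + 1 ≠ 0 := by rw [ha1]; exact neg_ne_zero.mpr hb0
  have ht : (a+1) ^ (Fintype.card F / 2) = -1 := by rw [ha1, h.chi_neg, hb]
  refine ⟨a, ?_, ha, ht⟩
  apply h.mem_of_quad ha0 ha1' ha ht
  linear_combination (v+1) * a * hab1 - hab2

lemma Ctx.exists_mixed (h : Ctx F v) :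
    ∃ y : F, y ∈ Sol v (v+1) ∧ y ^ (Fintype.card F / 2) = -1 ∧
      (y+1) ^ (Fintype.card F / 2) = 1 := by
  have hc : (v+1 : F) ≠ 0 := h.hv1
  have σne : (v+1) ^ (Fintype.card F / 2) ≠ 0 := pow_ne_zero _ hc
  have hD : ((v-1) * (5*v+3)) ≠ 0 := mul_ne_zero h.hv2 h.hv3
  have hDchi : ((v-1) * (5*v+3)) ^ (Fintype.card F / 2) = 1 := by
    rw [mul_pow, ← h.he1, ← (h.he1.trans h.he2)]
    rcases h.chi_dichot hc with hs | hs <;> rw [hs] <;> norm_num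
  obtain ⟨w, hw⟩ := (FiniteField.isSquare_iff h.hF2 hD).mpr hDchi
  have h2c : (2*(v+1) : F) ≠ 0 := mul_ne_zero h.two_ne hc
  set q1 : F := ((v-1) + w) / (2*(v+1)) with hq1
  set q2 : F := ((v-1) - w) / (2*(v+1)) with hq2
  have hsum : (v+1) * (q1 + q2) = v - 1 := by
    rw [hq1, hq2, ← add_div, mul_div_assoc', div_eq_iff h2c]; ring
  have hprod : (v+1) * (q1 * q2) = 1 - v := by
    rw [hq1, hq2, div_mul_div_comm, mul_div_assoc', div_eq_iff (mul_ne_zero h2c h2c)]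
    linear_combination (v+1) * hw
  obtain ⟨a, b, hab, ha, hb⟩ := h.pick (h.chi_prod_neg hprod)
  have hfacts : (v+1) * (a + b) = v - 1 ∧ (v+1) * (a*b) = 1 - v := by
    rcases hab with ⟨rfl, rfl⟩ | ⟨rfl, rfl⟩
    · exact ⟨hsum, hprod⟩
    · exact ⟨by linear_combination hsum, by linear_combination hprod⟩
  obtain ⟨hab1, hab2⟩ := hfacts
  have ha0 : a ≠ 0 := h.ne_zero_of_chi_neg_one ha
  have hb0 : b ≠ 0 := h.ne_zero_of_chi_one hb
  have h11 : (v+1) * ((a+1)*(b+1)) = (v+1) * 1 := by linear_combination hab1 + hab2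
  have h11' : (a+1) * (b+1) = 1 := mul_left_cancel₀ hc h11
  have ha1 : a + 1 ≠ 0 := by
    intro hh; rw [hh, zero_mul] at h11'; exact one_ne_zero h11'.symm
  have hquad : (v+1) * (a*(a+1)) = (v+1)*a - (1-v)*(a+1) := by
    linear_combination a * hab1 - hab2
  have hid : (v+1) * ((a+2)*(a+2)) = (5*v+3)*(a+1) := by linear_combination hquad
  have ha2 : a + 2 ≠ 0 := by
    intro hh
    have hz : (5*v+3) * (a+1) = 0 := by rw [← hid, hh]; ring
    exact mul_ne_zero h.hv3 ha1 hz
  have hc1 : ((v+1) * ((a+2)*(a+2))) ^ (Fintype.card F / 2)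
      = ((5*v+3) * (a+1)) ^ (Fintype.card F / 2) := by rw [hid]
  rw [h.chi_mul3, mul_pow, ← (h.he1.trans h.he2)] at hc1
  have hsq2 : (a+2) ^ (Fintype.card F / 2) * (a+2) ^ (Fintype.card F / 2) = 1 := by
    rcases h.chi_dichot ha2 with hs | hs <;> rw [hs] <;> norm_num
  rw [hsq2] at hc1
  have ht : (a+1) ^ (Fintype.card F / 2) = 1 := (mul_left_cancel₀ σne hc1).symm
  refine ⟨a, ?_, ha, ht⟩
  apply h.mem_of_quad ha0 ha1 ha ht
  linear_combination hquad

/-- The master count: exactly 3 solutions at c = v + 1. -/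
lemma Ctx.card_eq3 (h : Ctx F v) : (Sol v (v+1)).card = 3 := by
  obtain ⟨yp, hyp, hp1, hp2⟩ := h.exists_pure
  obtain ⟨ym, hym, hm1, hm2⟩ := h.exists_mixed
  have h0 : (0:F) ∈ Sol v (v+1) := h.zero_mem_iff.mpr rfl
  have hd1 : yp ≠ 0 := h.ne_zero_of_chi_neg_one hp1
  have hd2 : ym ≠ 0 := h.ne_zero_of_chi_neg_one hm1
  have hd3 : yp ≠ ym := by
    rintro rfl
    exact h.neg_one_ne_one (hp2.symm.trans hm2)
  refine le_antisymm (h.card_le3 _) ?_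
  have hsub : ({0, yp, ym} : Finset F) ⊆ Sol v (v+1) := by
    intro z hz
    simp only [mem_insert, mem_singleton] at hz
    rcases hz with rfl | rfl | rfl <;> assumption
  have hcard : ({0, yp, ym} : Finset F).card = 3 :=
    Finset.card_eq_three.mpr ⟨0, yp, ym, Ne.symm hd1, Ne.symm hd2, hd3, rfl⟩
  calc 3 = ({0, yp, ym} : Finset F).card := hcard.symm
    _ ≤ (Sol v (v+1)).card := card_le_card hsub

end existence

section assemble

lemma qchar_conv (hF2 : ringChar F ≠ 2) {x y : F} (heq : qchar x = qchar y)
    (hne : qchar x ≠ 0) :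
    x ≠ 0 ∧ y ≠ 0 ∧ x ^ (Fintype.card F / 2) = y ^ (Fintype.card F / 2) := by
  have hx0 : x ≠ 0 := by rintro rfl; simp [qchar] at hne
  have hy0 : y ≠ 0 := by
    rintro rfl
    apply hne
    rw [heq]
    simp [qchar]
  refine ⟨hx0, hy0, ?_⟩
  rw [qchar, qchar, if_neg hx0, if_neg hy0] at heq
  by_cases hx : IsSquare x <;> by_cases hy : IsSquare y
  · rw [(FiniteField.isSquare_iff hF2 hx0).mp hx, (FiniteField.isSquare_iff hF2 hy0).mp hy]
  · rw [if_pos hx, if_neg hy] at heq; norm_num at heq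
  · rw [if_neg hx, if_pos hy] at heq; norm_num at heq
  · have h1 : x ^ (Fintype.card F / 2) = -1 := by
      rcases FiniteField.pow_dichotomy hF2 hx0 with hh | hh
      · exact absurd ((FiniteField.isSquare_iff hF2 hx0).mpr hh) hx
      · exact hh
    have h2 : y ^ (Fintype.card F / 2) = -1 := by
      rcases FiniteField.pow_dichotomy hF2 hy0 with hh | hh
      · exact absurd ((FiniteField.isSquare_iff hF2 hy0).mpr hh) hy
      · exact hh
    rw [h1, h2]

lemma scale (hq19 : 19 < Fintype.card F) {a : F} (ha : a ≠ 0) (u y : F) :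
    nh (a ^ (Fintype.card F / 2) * u) y = a * nh u (a * y) := by
  rw [nh, nh, mul_pow, mul_pow]
  have e2 : a ^ (Fintype.card F / 2) = a * a ^ (Fintype.card F / 2 - 1) := by
    rw [← pow_succ']
    congr 1
    omega
  have e3 : a * a ^ (Fintype.card F - 2) = 1 := by
    rw [← pow_succ']
    have e : Fintype.card F - 2 + 1 = Fintype.card F - 1 := by omega
    rw [e]
    exact FiniteField.pow_card_sub_one_eq_one a ha
  linear_combination u * y ^ (Fintype.card F / 2 - 1) * e2
    - y ^ (Fintype.card F - 2) * e3

lemma transfer (hq19 : 19 < Fintype.card F) (u : F) {a : F} (b : F) (ha : a ≠ 0) :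
    (univ.filter fun x : F => nh u (x+a) - nh u x = b).card
      = (Sol (a ^ (Fintype.card F / 2) * u) (a*b)).card := by
  apply Finset.card_nbij' (i := fun x => a⁻¹ * x) (j := fun y => a * y)
  · intro x hx
    simp only [Finset.mem_coe] at hx ⊢
    rw [mem_filter] at hx
    rw [mem_Sol]
    rw [scale hq19 ha, scale hq19 ha]
    have e1 : a * (a⁻¹ * x + 1) = x + a := by field_simp
    have e2 : a * (a⁻¹ * x) = x := by field_simp
    rw [e1, e2]
    linear_combination a * hx.2
  · intro y hy
    simp only [Finset.mem_coe] at hy ⊢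
    rw [mem_Sol] at hy
    rw [mem_filter]
    refine ⟨mem_univ _, ?_⟩
    rw [scale hq19 ha, scale hq19 ha] at hy
    have e1 : a * (y + 1) = a * y + a := by ring
    rw [e1] at hy
    exact mul_left_cancel₀ ha (by linear_combination hy)
  · intro x _; field_simp
  · intro y _; field_simp

end assemble

end NHAux

theorem stmt_19 {F : Type*} [Field F] [Fintype F] (p n : ℕ)
    (hp : p.Prime) (hodd : p ≠ 2) (hn : 0 < n) (hcard : Fintype.card F = p ^ n)
    (hq4 : p ^ n % 4 = 3) (hq : 19 < p ^ n) (u : F)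
    (hu : qchar (u + 1) = qchar (u - 1) ∧ qchar (u - 1) = qchar (5 * u + 3) ∧
          qchar (5 * u + 3) = qchar (5 * u - 3) ∧ qchar (u + 1) ≠ 0)
    (fu : F → F) (hfu : ∀ x, fu x = u * x ^ ((Fintype.card F - 1) / 2 - 1) + x ^ (Fintype.card F - 2)) :
    (∀ a b : F, a ≠ 0 →
      (Finset.univ.filter fun x : F => fu (x + a) - fu x = b).card ≤ 3) ∧
    (∃ a b : F, a ≠ 0 ∧
      (Finset.univ.filter fun x : F => fu (x + a) - fu x = b).card = 3) := by
  have hq3 : Fintype.card F % 4 = 3 := by rw [hcard]; exact hq4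
  have hq19 : 19 < Fintype.card F := by rw [hcard]; exact hq
  have hq2 : Fintype.card F % 2 = 1 := by omega
  have hF2 : ringChar F ≠ 2 := by
    intro h2
    have := FiniteField.even_card_of_char_two h2
    omega
  obtain ⟨hA0, hB0, hAB⟩ := NHAux.qchar_conv hF2 hu.1 hu.2.2.2
  have hne2 : qchar (u - 1) ≠ 0 := by rw [← hu.1]; exact hu.2.2.2
  obtain ⟨_, hC0, hBC⟩ := NHAux.qchar_conv hF2 hu.2.1 hne2
  have hne3 : qchar (5*u + 3) ≠ 0 := by rw [← hu.2.1]; exact hne2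
  obtain ⟨_, hD0, hCD⟩ := NHAux.qchar_conv hF2 hu.2.2.1 hne3
  have ctxu : NHAux.Ctx F u := ⟨hF2, hq3, hq19, hA0, hB0, hC0, hD0, hAB, hBC, hCD⟩
  have hfu_eq : fu = NHAux.nh u := by
    funext x
    rw [hfu, NHAux.nh,
      show (Fintype.card F - 1) / 2 - 1 = Fintype.card F / 2 - 1 from by omega]
  constructor
  · intro a b ha
    simp only [hfu_eq]
    rw [NHAux.transfer hq19 u b ha]
    rcases FiniteField.pow_dichotomy hF2 ha with hα | hα
    · rw [hα, one_mul]
      exact ctxu.card_le3 _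
    · rw [hα, show (-1 : F) * u = -u from by ring]
      exact ctxu.neg.card_le3 _
  · refine ⟨1, u + 1, one_ne_zero, ?_⟩
    simp only [hfu_eq]
    rw [NHAux.transfer hq19 u (u+1) one_ne_zero, one_pow, one_mul, one_mul]
    exact ctxu.card_eq3
end
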